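/- arXiv:2406.01504 — 8 statements merged into one kernel-verified Lean document; each statement's English description precedes it below -/
import Mathlib

section
/- For every connected hypergraph H on n vertices (n ≥ 1), the Wiener index satisfies C(n,2) ≤ W(H) ≤ C(n+1,3), where C(a,b) denotes the binomial coefficient. -/
variable {α : Type*} {β : Type*}

/-- A hypergraph: a finite vertex set together with a set of edges,
each an at-least-2-element subset of the vertex set. -/
structure FinsetHypergraph (α : Type*) where
  verts : Finset α
  edges : Finset (Finset α)
  edge_sub : ∀ e ∈ edges, e ⊆ verts
  edge_card : ∀ e ∈ edges, 2 ≤ e.card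

namespace FinsetHypergraph

/-- The 2-section graph of a hypergraph: two distinct vertices are adjacent
iff some edge contains both. -/
def twoSection (H : FinsetHypergraph α) : SimpleGraph α where
  Adj u v := u ≠ v ∧ ∃ e ∈ H.edges, u ∈ e ∧ v ∈ e
  symm := by
    constructor
    rintro u v ⟨huv, e, he, hu, hv⟩
    exact ⟨huv.symm, e, he, hv, hu⟩
  loopless := by
    constructor
    rintro u ⟨h, -⟩
    exact h rfl

/-- Distance between two vertices: graph distance in the 2-section. -/
noncomputable def dist (H : FinsetHypergraph α) (u v : α) : ℕ :=
  H.twoSection.dist u v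

/-- A hypergraph is connected if every two of its vertices are joined by a path. -/
def Connected (H : FinsetHypergraph α) : Prop :=
  ∀ u ∈ H.verts, ∀ v ∈ H.verts, H.twoSection.Reachable u v

/-- The Wiener index (total distance): the sum of distances over all
unordered pairs of distinct vertices. -/
noncomputable def wiener [DecidableEq α] (H : FinsetHypergraph α) : ℕ :=
  ∑ p ∈ H.verts.sym2.filter (fun p => ¬ p.IsDiag),
    Sym2.lift ⟨fun u v => H.dist u v, fun _ _ => SimpleGraph.dist_comm⟩ p

/-- Vertex deletion: remove the vertex and all edges containing it. -/
def delete [DecidableEq α] (H : FinsetHypergraph α) (v : α) : FinsetHypergraph α where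
  verts := H.verts.erase v
  edges := H.edges.filter fun e => v ∉ e
  edge_sub := by
    intro e he x hx
    rw [Finset.mem_filter] at he
    exact Finset.mem_erase.mpr ⟨fun h => he.2 (h ▸ hx), H.edge_sub e he.1 hx⟩
  edge_card := fun e he => H.edge_card e (Finset.mem_filter.mp he).1

/-- A Šoltés hypergraph: a connected hypergraph on at least 2 vertices such that
deleting any vertex leaves a connected hypergraph with the same Wiener index. -/
def IsSoltes [DecidableEq α] (H : FinsetHypergraph α) : Prop :=
  2 ≤ H.verts.card ∧ H.Connected ∧
    ∀ v ∈ H.verts, (H.delete v).Connected ∧ (H.delete v).wiener = H.wiener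

/-- The diameter: the maximum distance over unordered pairs of distinct vertices. -/
noncomputable def diam [DecidableEq α] (H : FinsetHypergraph α) : ℕ :=
  H.verts.offDiag.sup fun p => H.dist p.1 p.2

/-- The degree of a vertex: the number of edges containing it. -/
def degree [DecidableEq α] (H : FinsetHypergraph α) (v : α) : ℕ :=
  (H.edges.filter fun e => v ∈ e).card

/-- FinsetHypergraph isomorphism: a bijection between the vertex sets mapping
edges onto edges. -/
def IsIsoTo [DecidableEq β] (H : FinsetHypergraph α) (H' : FinsetHypergraph β) : Prop :=
  ∃ f : α → β, Set.InjOn f ↑H.verts ∧ H'.verts = H.verts.image f ∧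
    H'.edges = H.edges.image fun e => e.image f

end FinsetHypergraph

namespace WienerAux
open SimpleGraph Finset

variable {α : Type*} [DecidableEq α]

set_option linter.unusedVariables false
set_option linter.unusedSectionVars false

@[reducible] def res (G : SimpleGraph α) (S : Finset α) : SimpleGraph α where
  Adj u v := G.Adj u v ∧ u ∈ S ∧ v ∈ S
  symm := ⟨fun u v ⟨h, hu, hv⟩ => ⟨h.symm, hv, hu⟩⟩
  loopless := ⟨fun u ⟨h, _⟩ => G.loopless.irrefl u h⟩

lemma res_mono {G : SimpleGraph α} {S T : Finset α} (h : S ⊆ T) : res G S ≤ res G T :=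
  fun _ _ ⟨ha, hu, hv⟩ => ⟨ha, h hu, h hv⟩

lemma exists_walk_to_getVert {G : SimpleGraph α} {v u : α} (p : G.Walk v u) :
    ∀ k, k ≤ p.length → ∃ q : G.Walk v (p.getVert k), q.length = k := by
  induction p with
  | nil => intro k hk; simp at hk; subst hk; exact ⟨SimpleGraph.Walk.nil, rfl⟩
  | cons h p ih =>
    intro k hk
    cases k with
    | zero => exact ⟨SimpleGraph.Walk.nil.copy rfl (SimpleGraph.Walk.getVert_zero _).symm, rfl⟩
    | succ k =>
      obtain ⟨q, hq⟩ := ih k (by simpa [SimpleGraph.Walk.length_cons] using hk)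
      exact ⟨(SimpleGraph.Walk.cons h q).copy rfl (SimpleGraph.Walk.getVert_cons_succ _ _).symm,
        by simpa using hq⟩

lemma exists_walk_from_getVert {G : SimpleGraph α} {v u : α} (p : G.Walk v u) :
    ∀ k, k ≤ p.length → ∃ r : G.Walk (p.getVert k) u, r.length + k = p.length := by
  induction p with
  | nil => intro k hk; simp at hk; subst hk; exact ⟨SimpleGraph.Walk.nil, rfl⟩
  | cons h p ih =>
    intro k hk
    cases k with
    | zero =>
      exact ⟨(SimpleGraph.Walk.cons h p).copy (SimpleGraph.Walk.getVert_zero _).symm rfl, by simp⟩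
    | succ k =>
      obtain ⟨r, hr⟩ := ih k (by simpa [SimpleGraph.Walk.length_cons] using hk)
      refine ⟨r.copy (SimpleGraph.Walk.getVert_cons_succ _ _).symm rfl, ?_⟩
      simp [SimpleGraph.Walk.length_copy, SimpleGraph.Walk.length_cons]
      omega

lemma layer {G : SimpleGraph α} {S : Finset α} {v u : α}
    (hr : (res G S).Reachable v u) {k : ℕ} (hk1 : 1 ≤ k) (hk : k ≤ (res G S).dist v u) :
    ∃ w, w ∈ S ∧ w ≠ v ∧ (res G S).dist v w = k := by
  obtain ⟨p, hp⟩ := hr.exists_walk_length_eq_dist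
  have hklen : k ≤ p.length := hp ▸ hk
  obtain ⟨q, hq⟩ := exists_walk_to_getVert p k hklen
  obtain ⟨r, hrr⟩ := exists_walk_from_getVert p k hklen
  have hle : (res G S).dist v (p.getVert k) ≤ k := le_trans (SimpleGraph.dist_le q) hq.le
  have hge : k ≤ (res G S).dist v (p.getVert k) := by
    obtain ⟨q', hq'⟩ := SimpleGraph.Reachable.exists_walk_length_eq_dist
      (⟨q⟩ : (res G S).Reachable v (p.getVert k))
    have h1 : (res G S).dist v u ≤ (q'.append r).length := SimpleGraph.dist_le _
    rw [SimpleGraph.Walk.length_append] at h1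
    omega
  have hd : (res G S).dist v (p.getVert k) = k := le_antisymm hle hge
  refine ⟨p.getVert k, ?_, ?_, hd⟩
  · have h1 : k - 1 < p.length := by omega
    have := p.adj_getVert_succ h1
    rw [show k - 1 + 1 = k by omega] at this
    exact this.2.2
  · intro hvw
    rw [hvw, SimpleGraph.dist_self] at hd
    omega

lemma rank_sum : ∀ (n : ℕ) (s : Finset α) (f : α → ℕ), s.card = n →
    (∀ u ∈ s, f u ≤ ((s.filter fun w => f w ≤ f u).image f).card) →
    ∑ u ∈ s, f u ≤ (n + 1).choose 2 := by
  intro n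
  induction n with
  | zero =>
    intro s f hc _
    rw [Finset.card_eq_zero.mp hc]
    simp
  | succ n ih =>
    intro s f hc h
    have hne : s.Nonempty := Finset.card_pos.mp (by omega)
    obtain ⟨u₀, hu₀, hmax⟩ := Finset.exists_max_image s f hne
    have hkey : f u₀ ≤ n + 1 := by
      calc f u₀ ≤ ((s.filter fun w => f w ≤ f u₀).image f).card := h u₀ hu₀
        _ ≤ (s.filter fun w => f w ≤ f u₀).card := Finset.card_image_le
        _ ≤ s.card := Finset.card_filter_le _ _
        _ = n + 1 := hc
    have hers : (s.erase u₀).card = n := by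
      simp [Finset.card_erase_of_mem hu₀, hc]
    have hsub : ∀ u ∈ s.erase u₀,
        f u ≤ (((s.erase u₀).filter fun w => f w ≤ f u).image f).card := by
      intro u hu
      have hus : u ∈ s := Finset.mem_of_mem_erase hu
      refine le_trans (h u hus) (Finset.card_le_card ?_)
      intro x hx
      rw [Finset.mem_image] at hx ⊢
      obtain ⟨w, hw, hfw⟩ := hx
      rw [Finset.mem_filter] at hw
      by_cases hwu : w = u₀
      · refine ⟨u, ?_, ?_⟩
        · rw [Finset.mem_filter]; exact ⟨hu, le_refl _⟩
        · subst hwu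
          have h1 : f u ≤ f w := hmax u hus
          have h2 : f w ≤ f u := hw.2
          omega
      · exact ⟨w, Finset.mem_filter.mpr ⟨Finset.mem_erase.mpr ⟨hwu, hw.1⟩, hw.2⟩, hfw⟩
    have hsum := ih (s.erase u₀) f hers hsub
    have heq : ∑ u ∈ s, f u = f u₀ + ∑ u ∈ s.erase u₀, f u :=
      (Finset.add_sum_erase s f hu₀).symm
    rw [heq]
    have : (n + 1 + 1).choose 2 = (n + 1) + (n + 1).choose 2 := by
      rw [Nat.choose_succ_succ]
      simp [Nat.choose_one_right, Nat.add_comm]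
    omega

lemma source_sum {G : SimpleGraph α} {S : Finset α} {v : α} (hv : v ∈ S)
    (hr : ∀ u ∈ S, (res G S).Reachable v u) :
    ∑ u ∈ S.erase v, (res G S).dist v u ≤ S.card.choose 2 := by
  have hcard : (S.erase v).card = S.card - 1 := Finset.card_erase_of_mem hv
  have h1 : 1 ≤ S.card := Finset.card_pos.mpr ⟨v, hv⟩
  have hb := rank_sum (S.erase v).card (S.erase v) (fun u => (res G S).dist v u) rfl ?_
  · rw [hcard] at hb
    have : S.card - 1 + 1 = S.card := by omega
    rw [this] at hb
    exact hb
  · intro u hu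
    have hune : u ≠ v := (Finset.mem_erase.mp hu).1
    have huS : u ∈ S := (Finset.mem_erase.mp hu).2
    have hru : (res G S).Reachable v u := hr u huS
    have hd1 : 1 ≤ (res G S).dist v u := hru.pos_dist_of_ne (Ne.symm hune)
    have hsub : Finset.Icc 1 ((res G S).dist v u) ⊆
        (((S.erase v).filter fun w => (res G S).dist v w ≤ (res G S).dist v u).image
          fun w => (res G S).dist v w) := by
      intro k hk
      rw [Finset.mem_Icc] at hk
      obtain ⟨w, hwS, hwv, hwd⟩ := layer hru hk.1 hk.2
      rw [Finset.mem_image]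
      exact ⟨w, Finset.mem_filter.mpr ⟨Finset.mem_erase.mpr ⟨hwv, hwS⟩, by omega⟩, hwd⟩
    calc (res G S).dist v u = (Finset.Icc 1 ((res G S).dist v u)).card := by
          rw [Nat.card_Icc]; omega
      _ ≤ _ := Finset.card_le_card hsub

lemma walk_avoid {G : SimpleGraph α} {S : Finset α} {v a b : α}
    (p : (res G S).Walk a b) (hv : v ∉ p.support) :
    Nonempty ((res G (S.erase v)).Walk a b) := by
  induction p with
  | nil => exact ⟨SimpleGraph.Walk.nil⟩
  | @cons a c b h q ih =>
    rw [SimpleGraph.Walk.support_cons, List.mem_cons] at hv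
    push_neg at hv
    obtain ⟨hva, hvq⟩ := hv
    have hvc : v ≠ c := fun h' => hvq (h' ▸ q.start_mem_support)
    obtain ⟨q'⟩ := ih hvq
    exact ⟨SimpleGraph.Walk.cons
      ⟨h.1, Finset.mem_erase.mpr ⟨Ne.symm hva, h.2.1⟩,
        Finset.mem_erase.mpr ⟨Ne.symm hvc, h.2.2⟩⟩ q'⟩

/-- Main upper bound. -/
lemma wiener_le : ∀ (n : ℕ) (S : Finset α) (G : SimpleGraph α), S.card = n →
    (∀ u ∈ S, ∀ w ∈ S, (res G S).Reachable u w) →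
    (∑ p ∈ S.sym2.filter (fun p => ¬ p.IsDiag),
      Sym2.lift ⟨fun u w => (res G S).dist u w, fun _ _ => SimpleGraph.dist_comm⟩ p)
      ≤ (n + 1).choose 3 := by
  intro n
  induction n with
  | zero =>
    intro S G hc _
    rw [Finset.card_eq_zero.mp hc]
    simp
  | succ n ih =>
    intro S G hc hreach
    by_cases hn : n = 0
    · subst hn
      obtain ⟨u₀, hu₀⟩ := Finset.card_eq_one.mp hc
      subst hu₀
      have : ({u₀} : Finset α).sym2.filter (fun p => ¬ p.IsDiag) = ∅ := by
        ext z
        induction z with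
        | _ x y =>
          simp only [Finset.mem_filter, Finset.mk_mem_sym2_iff, Finset.mem_singleton,
            Sym2.isDiag_iff_proj_eq, Finset.notMem_empty, iff_false]
          rintro ⟨⟨rfl, rfl⟩, h⟩
          exact h rfl
      rw [this]
      simp
    -- card S = n + 1 ≥ 2
    have hne : S.Nonempty := Finset.card_pos.mp (by omega)
    obtain ⟨u₀, hu₀⟩ := hne
    obtain ⟨v, hvS, hmax⟩ := Finset.exists_max_image S (fun u => (res G S).dist u₀ u) ⟨u₀, hu₀⟩
    have hvne : v ≠ u₀ := by
      intro h
      subst h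
      have hall : ∀ u ∈ S, u = v := by
        intro u hu
        have h1 := hmax u hu
        simp only [SimpleGraph.dist_self] at h1
        have h0 : (res G S).dist v u = 0 := by omega
        exact ((hreach v hvS u hu).dist_eq_zero_iff.mp h0).symm
      have hsub : S ⊆ {v} := fun u hu => Finset.mem_singleton.mpr (hall u hu)
      have hle := Finset.card_le_card hsub
      simp only [Finset.card_singleton] at hle
      omega
    set S' := S.erase v with hS'
    have hu₀' : u₀ ∈ S' := Finset.mem_erase.mpr ⟨Ne.symm hvne, hu₀⟩
    have hcS' : S'.card = n := by
      simp [hS', Finset.card_erase_of_mem hvS, hc]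
    have reach' : ∀ u ∈ S', (res G S').Reachable u₀ u := by
      intro u hu
      have huS : u ∈ S := Finset.mem_of_mem_erase hu
      have hune : u ≠ v := (Finset.mem_erase.mp hu).1
      obtain ⟨p, hp⟩ := (hreach u₀ hu₀ u huS).exists_walk_length_eq_dist
      have hvp : v ∉ p.support := by
        intro hvp
        have hlt : (res G S).dist u₀ v ≤ (p.takeUntil v hvp).length := SimpleGraph.dist_le _
        have hld : 1 ≤ (p.dropUntil v hvp).length := by
          by_contra hcon
          push_neg at hcon
          have h0 : (p.dropUntil v hvp).length = 0 := by omega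
          exact hune (SimpleGraph.Walk.eq_of_length_eq_zero h0).symm
        have hlen : (p.takeUntil v hvp).length + (p.dropUntil v hvp).length = p.length := by
          conv_rhs => rw [← p.take_spec hvp]
          rw [SimpleGraph.Walk.length_append]
        have hm := hmax u huS
        omega
      exact walk_avoid p hvp
    have reach'' : ∀ u ∈ S', ∀ w ∈ S', (res G S').Reachable u w :=
      fun u hu w hw => (reach' u hu).symm.trans (reach' w hw)
    have hdis : Disjoint (S'.image fun u => s(v, u)) (S'.sym2.filter fun p => ¬ p.IsDiag) := by
      rw [Finset.disjoint_left]
      intro z hz1 hz2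
      rw [Finset.mem_image] at hz1
      obtain ⟨u, hu, rfl⟩ := hz1
      rw [Finset.mem_filter] at hz2
      have hvmem := Finset.mem_sym2_iff.mp hz2.1 v (by simp)
      exact (Finset.mem_erase.mp hvmem).1 rfl
    have hdecomp : S.sym2.filter (fun p => ¬ p.IsDiag)
        = (S'.image fun u => s(v, u)) ∪ S'.sym2.filter (fun p => ¬ p.IsDiag) := by
      ext z
      induction z with
      | _ x y =>
        simp only [Finset.mem_filter, Finset.mk_mem_sym2_iff, Finset.mem_union,
          Finset.mem_image, Sym2.isDiag_iff_proj_eq]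
        constructor
        · rintro ⟨⟨hx, hy⟩, hxy⟩
          by_cases hxv : x = v
          · subst hxv
            exact Or.inl ⟨y, Finset.mem_erase.mpr ⟨fun h => hxy h.symm, hy⟩, rfl⟩
          · by_cases hyv : y = v
            · subst hyv
              exact Or.inl ⟨x, Finset.mem_erase.mpr ⟨hxv, hx⟩, Sym2.eq_swap⟩
            · exact Or.inr ⟨⟨Finset.mem_erase.mpr ⟨hxv, hx⟩, Finset.mem_erase.mpr ⟨hyv, hy⟩⟩, hxy⟩
        · rintro (⟨u, hu, hequ⟩ | ⟨⟨hx, hy⟩, hxy⟩)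
          · rw [Sym2.eq_iff] at hequ
            have huv : u ≠ v := (Finset.mem_erase.mp hu).1
            have huS : u ∈ S := Finset.mem_of_mem_erase hu
            rcases hequ with ⟨hvx, huy⟩ | ⟨hvy, hux⟩
            · subst hvx; subst huy
              exact ⟨⟨hvS, huS⟩, fun h => huv h.symm⟩
            · subst hvy; subst hux
              exact ⟨⟨huS, hvS⟩, huv⟩
          · exact ⟨⟨Finset.mem_of_mem_erase hx, Finset.mem_of_mem_erase hy⟩, hxy⟩
    rw [hdecomp, Finset.sum_union hdis, Finset.sum_image ?inj]
    case inj =>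
      intro a ha b hb hab
      rw [Sym2.eq_iff] at hab
      rcases hab with ⟨-, h⟩ | ⟨h1, h2⟩
      · exact h
      · exact absurd h1.symm (Finset.mem_erase.mp hb).1
    simp only [Sym2.lift_mk]
    have hsrc : ∑ u ∈ S', (res G S).dist v u ≤ (n + 1).choose 2 := by
      have := source_sum hvS (fun u hu => hreach v hvS u hu)
      rwa [hc] at this
    have hpair : (∑ p ∈ S'.sym2.filter (fun p => ¬ p.IsDiag),
        Sym2.lift ⟨fun u w => (res G S).dist u w, fun _ _ => SimpleGraph.dist_comm⟩ p)
        ≤ ∑ p ∈ S'.sym2.filter (fun p => ¬ p.IsDiag),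
        Sym2.lift ⟨fun u w => (res G S').dist u w, fun _ _ => SimpleGraph.dist_comm⟩ p := by
      refine Finset.sum_le_sum fun p hp => ?_
      revert hp
      refine Sym2.inductionOn p ?_
      intro x y hp
      rw [Finset.mem_filter, Finset.mk_mem_sym2_iff] at hp
      simp only [Sym2.lift_mk]
      exact SimpleGraph.Reachable.dist_anti (res_mono (Finset.erase_subset _ _))
        (reach'' x hp.1.1 y hp.1.2)
    have hih := ih S' G hcS' reach''
    have harith : (n + 1 + 1).choose 3 = (n + 1).choose 2 + (n + 1).choose 3 :=
      Nat.choose_succ_succ (n + 1) 2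
    omega

end WienerAux

namespace WienerAux

variable {α : Type*} [DecidableEq α]

set_option linter.unusedSectionVars false

lemma two_mem {H : FinsetHypergraph α} {u v : α} (h : H.twoSection.Adj u v) :
    u ∈ H.verts ∧ v ∈ H.verts := by
  have h' : u ≠ v ∧ ∃ e ∈ H.edges, u ∈ e ∧ v ∈ e := h
  obtain ⟨-, e, he, hu, hv⟩ := h'
  exact ⟨H.edge_sub e he hu, H.edge_sub e he hv⟩

lemma walk_res {H : FinsetHypergraph α} {a b : α} (p : H.twoSection.Walk a b) :
    ∃ q : (res H.twoSection H.verts).Walk a b, q.length = p.length := by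
  induction p with
  | nil => exact ⟨.nil, rfl⟩
  | cons h p ih =>
    obtain ⟨q, hq⟩ := ih
    exact ⟨.cons ⟨h, (two_mem h).1, (two_mem h).2⟩ q, by simp [hq]⟩

lemma reach_res {H : FinsetHypergraph α} (hconn : H.Connected) :
    ∀ u ∈ H.verts, ∀ w ∈ H.verts, (res H.twoSection H.verts).Reachable u w := by
  intro u hu w hw
  obtain ⟨p⟩ := hconn u hu w hw
  obtain ⟨q, -⟩ := walk_res p
  exact ⟨q⟩

lemma dist_eq_res {H : FinsetHypergraph α} (hconn : H.Connected) {a b : α}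
    (ha : a ∈ H.verts) (hb : b ∈ H.verts) :
    H.dist a b = (res H.twoSection H.verts).dist a b := by
  have hr : H.twoSection.Reachable a b := hconn a ha b hb
  obtain ⟨p, hp⟩ := hr.exists_walk_length_eq_dist
  obtain ⟨q, hq⟩ := walk_res p
  have hd : H.dist a b = H.twoSection.dist a b := rfl
  have h1 : (res H.twoSection H.verts).dist a b ≤ H.twoSection.dist a b := by
    have := SimpleGraph.dist_le q
    rw [hq, hp] at this
    exact this
  have h2 : H.twoSection.dist a b ≤ (res H.twoSection H.verts).dist a b :=
    SimpleGraph.Reachable.dist_anti (fun _ _ h => h.1) ⟨q⟩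
  omega

end WienerAux

theorem stmt0 {α : Type*} [DecidableEq α] (H : FinsetHypergraph α)
    (hconn : H.Connected) (hn : 1 ≤ H.verts.card) :
    (H.verts.card).choose 2 ≤ H.wiener ∧ H.wiener ≤ (H.verts.card + 1).choose 3 := by
  have hwrw : H.wiener = ∑ p ∈ H.verts.sym2.filter (fun p => ¬ p.IsDiag),
      Sym2.lift ⟨fun u w => (WienerAux.res H.twoSection H.verts).dist u w,
        fun _ _ => SimpleGraph.dist_comm⟩ p := by
    unfold FinsetHypergraph.wiener
    refine Finset.sum_congr rfl fun p hp => ?_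
    revert hp
    refine Sym2.inductionOn p ?_
    intro x y hp
    rw [Finset.mem_filter, Finset.mk_mem_sym2_iff] at hp
    simp only [Sym2.lift_mk]
    exact WienerAux.dist_eq_res hconn hp.1.1 hp.1.2
  have hcardfilter : (H.verts.sym2.filter fun p => ¬ p.IsDiag).card = (H.verts.card).choose 2 := by
    have hdiag : H.verts.sym2.filter (fun p => p.IsDiag) = H.verts.image Sym2.diag := by
      ext z
      induction z with
      | _ x y =>
        simp only [Finset.mem_filter, Finset.mk_mem_sym2_iff, Sym2.isDiag_iff_proj_eq,
          Finset.mem_image]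
        constructor
        · rintro ⟨⟨hx, hy⟩, rfl⟩
          exact ⟨x, hx, rfl⟩
        · rintro ⟨a, ha, heq⟩
          have : Sym2.diag a = s(a, a) := rfl
          rw [this, Sym2.eq_iff] at heq
          rcases heq with ⟨rfl, rfl⟩ | ⟨rfl, rfl⟩ <;> exact ⟨⟨ha, ha⟩, rfl⟩
    have hdiagcard : (H.verts.sym2.filter fun p => p.IsDiag).card = H.verts.card := by
      rw [hdiag, Finset.card_image_of_injective _ Sym2.diag_injective]
    have hpart := Finset.card_filter_add_card_filter_not
      (s := H.verts.sym2) (p := fun p => p.IsDiag)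
    have hsym2 : H.verts.sym2.card = (H.verts.card + 1).choose 2 := Finset.card_sym2 _
    have hch : (H.verts.card + 1).choose 2 = H.verts.card + (H.verts.card).choose 2 := by
      rw [Nat.choose_succ_succ, Nat.choose_one_right]
    omega
  constructor
  · rw [← hcardfilter]
    have hterm : ∀ p ∈ H.verts.sym2.filter (fun p => ¬ p.IsDiag),
        1 ≤ Sym2.lift ⟨fun u v => H.dist u v, fun _ _ => SimpleGraph.dist_comm⟩ p := by
      intro p hp
      revert hp
      refine Sym2.inductionOn p ?_
      intro x y hp
      rw [Finset.mem_filter, Finset.mk_mem_sym2_iff, Sym2.isDiag_iff_proj_eq] at hp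
      simp only [Sym2.lift_mk]
      exact (hconn x hp.1.1 y hp.1.2).pos_dist_of_ne hp.2
    have := Finset.card_nsmul_le_sum _ _ 1 hterm
    simpa [FinsetHypergraph.wiener] using this
  · rw [hwrw]
    exact WienerAux.wiener_le H.verts.card H.verts H.twoSection rfl
      (WienerAux.reach_res hconn)
end

section
/- There is no Šoltés hypergraph of order at most 4. -/
variable {α : Type*} {β : Type*}

/-- A hypergraph: a finite vertex set together with a set of edges,
each an at-least-2-element subset of the vertex set. -/
structure Hypergraph' (α : Type*) where
  verts : Finset α
  edges : Finset (Finset α)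
  edge_sub : ∀ e ∈ edges, e ⊆ verts
  edge_card : ∀ e ∈ edges, 2 ≤ e.card

namespace Hypergraph'

/-- The 2-section graph of a hypergraph: two distinct vertices are adjacent
iff some edge contains both. -/
def twoSection (H : Hypergraph' α) : SimpleGraph α where
  Adj u v := u ≠ v ∧ ∃ e ∈ H.edges, u ∈ e ∧ v ∈ e
  symm := by
    constructor
    rintro u v ⟨huv, e, he, hu, hv⟩
    exact ⟨huv.symm, e, he, hv, hu⟩
  loopless := by
    constructor
    rintro u ⟨h, -⟩
    exact h rfl

/-- Distance between two vertices: graph distance in the 2-section. -/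
noncomputable def dist (H : Hypergraph' α) (u v : α) : ℕ :=
  H.twoSection.dist u v

/-- A hypergraph is connected if every two of its vertices are joined by a path. -/
def Connected (H : Hypergraph' α) : Prop :=
  ∀ u ∈ H.verts, ∀ v ∈ H.verts, H.twoSection.Reachable u v

/-- The Wiener index (total distance): the sum of distances over all
unordered pairs of distinct vertices. -/
noncomputable def wiener [DecidableEq α] (H : Hypergraph' α) : ℕ :=
  ∑ p ∈ H.verts.sym2.filter (fun p => ¬ p.IsDiag),
    Sym2.lift ⟨fun u v => H.dist u v, fun _ _ => SimpleGraph.dist_comm⟩ p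

/-- Vertex deletion: remove the vertex and all edges containing it. -/
def delete [DecidableEq α] (H : Hypergraph' α) (v : α) : Hypergraph' α where
  verts := H.verts.erase v
  edges := H.edges.filter fun e => v ∉ e
  edge_sub := by
    intro e he x hx
    rw [Finset.mem_filter] at he
    exact Finset.mem_erase.mpr ⟨fun h => he.2 (h ▸ hx), H.edge_sub e he.1 hx⟩
  edge_card := fun e he => H.edge_card e (Finset.mem_filter.mp he).1

/-- A Šoltés hypergraph: a connected hypergraph on at least 2 vertices such that
deleting any vertex leaves a connected hypergraph with the same Wiener index. -/
def IsSoltes [DecidableEq α] (H : Hypergraph' α) : Prop :=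
  2 ≤ H.verts.card ∧ H.Connected ∧
    ∀ v ∈ H.verts, (H.delete v).Connected ∧ (H.delete v).wiener = H.wiener

/-- The diameter: the maximum distance over unordered pairs of distinct vertices. -/
noncomputable def diam [DecidableEq α] (H : Hypergraph' α) : ℕ :=
  H.verts.offDiag.sup fun p => H.dist p.1 p.2

/-- The degree of a vertex: the number of edges containing it. -/
def degree [DecidableEq α] (H : Hypergraph' α) (v : α) : ℕ :=
  (H.edges.filter fun e => v ∈ e).card

/-- Hypergraph isomorphism: a bijection between the vertex sets mapping
edges onto edges. -/
def IsIsoTo [DecidableEq β] (H : Hypergraph' α) (H' : Hypergraph' β) : Prop :=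
  ∃ f : α → β, Set.InjOn f ↑H.verts ∧ H'.verts = H.verts.image f ∧
    H'.edges = H.edges.image fun e => e.image f

end Hypergraph'


namespace Hypergraph'

lemma adj_mem_verts (H : Hypergraph' α) {u w : α} (h : H.twoSection.Adj u w) :
    w ∈ H.verts := by
  obtain ⟨-, e, he, -, hw⟩ := h
  exact H.edge_sub e he hw

lemma walk_support_subset (H : Hypergraph' α) {u v : α}
    (p : H.twoSection.Walk u v) : u ∈ H.verts → ∀ x ∈ p.support, x ∈ H.verts := by
  induction p with
  | nil => intro hu; simpa using hu
  | cons h q ih =>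
    intro hu x hx
    rw [SimpleGraph.Walk.support_cons] at hx
    rcases List.mem_cons.mp hx with rfl | hx
    · exact hu
    · exact ih (H.adj_mem_verts h) x hx

lemma dist_add_one_le_card [DecidableEq α] (H : Hypergraph' α) {u v : α} (hu : u ∈ H.verts)
    (hr : H.twoSection.Reachable u v) : H.dist u v + 1 ≤ H.verts.card := by
  obtain ⟨p⟩ := hr
  have hnd := p.bypass_isPath.support_nodup
  have hsub : ∀ x ∈ p.bypass.support, x ∈ H.verts := fun x hx =>
    H.walk_support_subset p hu x (p.support_bypass_subset hx)
  have hc : p.bypass.support.toFinset.card ≤ H.verts.card :=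
    Finset.card_le_card (fun x hx => hsub x (List.mem_toFinset.mp hx))
  rw [List.toFinset_card_of_nodup hnd, SimpleGraph.Walk.length_support] at hc
  exact le_trans (by simpa [dist] using Nat.add_le_add_right (H.twoSection.dist_le p.bypass) 1) hc

lemma card_pairs [DecidableEq α] (s : Finset α) :
    (s.sym2.filter (fun p => ¬ p.IsDiag)).card = s.card.choose 2 := by
  have h1 : s.sym2.filter (fun p => p.IsDiag) = s.image (fun a => s(a, a)) := by
    ext p
    induction p using Sym2.inductionOn with
    | hf x y =>
      simp only [Finset.mem_filter, Finset.mk_mem_sym2_iff, Sym2.mk_isDiag_iff,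
        Finset.mem_image, Sym2.eq_iff]
      constructor
      · rintro ⟨⟨hx, hy⟩, rfl⟩; exact ⟨x, hx, Or.inl ⟨rfl, rfl⟩⟩
      · rintro ⟨a, ha, (⟨rfl, rfl⟩ | ⟨rfl, rfl⟩)⟩ <;> exact ⟨⟨ha, ha⟩, rfl⟩
  have h2 : (s.image (fun a => s(a, a))).card = s.card :=
    Finset.card_image_of_injective _ (fun a b hab => by
      simpa using (Sym2.eq_iff.mp hab))
  have h3 := Finset.card_filter_add_card_filter_not
    (s := s.sym2) (p := fun p => p.IsDiag)
  simp only [h1, h2, Finset.card_sym2] at h3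
  have h4 : (s.card + 1).choose 2 = s.card.choose 1 + s.card.choose 2 :=
    Nat.choose_succ_succ _ _
  have h5 : s.card.choose 1 = s.card := Nat.choose_one_right _
  omega


lemma choose_le_wiener [DecidableEq α] (H : Hypergraph' α) (hc : H.Connected) :
    H.verts.card.choose 2 ≤ H.wiener := by
  rw [← card_pairs H.verts, wiener]
  have h : ∀ p ∈ H.verts.sym2.filter (fun p => ¬ p.IsDiag),
      1 ≤ Sym2.lift ⟨fun u v => H.dist u v, fun _ _ => SimpleGraph.dist_comm⟩ p := by
    intro p hp
    revert hp
    induction p using Sym2.inductionOn with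
    | hf x y =>
      intro hp
      rw [Finset.mem_filter, Finset.mk_mem_sym2_iff] at hp
      have hne : x ≠ y := by simpa using hp.2
      simpa [Sym2.lift_mk, dist, Nat.one_le_iff_ne_zero, Nat.pos_iff_ne_zero] using (hc x hp.1.1 y hp.1.2).pos_dist_of_ne hne
  simpa using Finset.card_nsmul_le_sum _ _ 1 h

lemma wiener_le [DecidableEq α] (H : Hypergraph' α) (hc : H.Connected) :
    H.wiener ≤ H.verts.card.choose 2 * (H.verts.card - 1) := by
  rw [← card_pairs H.verts, wiener]
  have h : ∀ p ∈ H.verts.sym2.filter (fun p => ¬ p.IsDiag),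
      Sym2.lift ⟨fun u v => H.dist u v, fun _ _ => SimpleGraph.dist_comm⟩ p
        ≤ H.verts.card - 1 := by
    intro p hp
    revert hp
    induction p using Sym2.inductionOn with
    | hf x y =>
      intro hp
      rw [Finset.mem_filter, Finset.mk_mem_sym2_iff] at hp
      have := H.dist_add_one_le_card hp.1.1 (hc x hp.1.1 y hp.1.2)
      simp only [Sym2.lift_mk]
      omega
  simpa using Finset.sum_le_card_nsmul _ _ _ h

lemma wiener_le_five [DecidableEq α] (H : Hypergraph' α) (hc : H.Connected)
    (h3 : H.verts.card = 3) : H.wiener ≤ 5 := by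
  obtain ⟨a, ha, b, hb, hab⟩ := Finset.one_lt_card.mp (show 1 < H.verts.card by omega)
  obtain ⟨p⟩ := hc a ha b hb
  cases p with
  | nil => exact absurd rfl hab
  | @cons _ w _ h q =>
    have hw : w ∈ H.verts := H.adj_mem_verts h
    have hne : a ≠ w := h.ne
    have hd1 : H.dist a w = 1 := SimpleGraph.dist_eq_one_iff_adj.mpr h
    set f : Sym2 α → ℕ :=
      Sym2.lift ⟨fun u v => H.dist u v, fun _ _ => SimpleGraph.dist_comm⟩ with hf
    set P := H.verts.sym2.filter (fun p => ¬ p.IsDiag) with hP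
    have hp0 : s(a, w) ∈ P := by
      rw [hP, Finset.mem_filter, Finset.mk_mem_sym2_iff]
      exact ⟨⟨ha, hw⟩, by simpa using hne⟩
    have hPcard : P.card = 3 := by rw [hP, card_pairs, h3]; decide
    have hbound : ∀ p ∈ P.erase s(a, w), f p ≤ 2 := by
      intro p hp
      have hp' : p ∈ P := Finset.mem_of_mem_erase hp
      revert hp'
      induction p using Sym2.inductionOn with
      | hf x y =>
        intro hp'
        rw [hP, Finset.mem_filter, Finset.mk_mem_sym2_iff] at hp'
        have := H.dist_add_one_le_card hp'.1.1 (hc x hp'.1.1 y hp'.1.2)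
        simp only [hf, Sym2.lift_mk]
        omega
    have hrest : ∑ p ∈ P.erase s(a, w), f p ≤ (P.erase s(a, w)).card • 2 :=
      Finset.sum_le_card_nsmul _ _ _ hbound
    have hcard : (P.erase s(a, w)).card = 2 := by
      rw [Finset.card_erase_of_mem hp0, hPcard]
    have hsum : H.wiener = f s(a, w) + ∑ p ∈ P.erase s(a, w), f p :=
      (Finset.add_sum_erase P f hp0).symm
    have hf0 : f s(a, w) = 1 := by simp [hf, Sym2.lift_mk, hd1]
    rw [hcard] at hrest
    simp only [smul_eq_mul] at hrest
    omega


end Hypergraph'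

theorem stmt2 {α : Type*} [DecidableEq α] (H : Hypergraph' α)
    (hn : H.verts.card ≤ 4) : ¬ H.IsSoltes := by
  rintro ⟨h2, hconn, hdel⟩
  obtain ⟨v, hv⟩ := Finset.card_pos.mp (show 0 < H.verts.card by omega)
  obtain ⟨hDc, hW⟩ := hdel v hv
  have hDcard : (H.delete v).verts.card = H.verts.card - 1 :=
    Finset.card_erase_of_mem hv
  have hlow := H.choose_le_wiener hconn
  have hup := (H.delete v).wiener_le hDc
  rw [hDcard] at hup
  have hcases : H.verts.card = 2 ∨ H.verts.card = 3 ∨ H.verts.card = 4 := by omega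
  rcases hcases with h | h | h
  · rw [h] at hup hlow
    have e1 : Nat.choose 2 2 = 1 := by decide
    have e2 : Nat.choose (2 - 1) 2 = 0 := by decide
    rw [e1] at hlow
    rw [e2] at hup
    omega
  · rw [h] at hup hlow
    have e1 : Nat.choose 3 2 = 3 := by decide
    have e2 : Nat.choose (3 - 1) 2 = 1 := by decide
    rw [e1] at hlow
    rw [e2] at hup
    omega
  · rw [h] at hlow
    have e1 : Nat.choose 4 2 = 6 := by decide
    rw [e1] at hlow
    have h5 := (H.delete v).wiener_le_five hDc (by omega)
    omega
end

section
/- The hypergraph H on vertex set {0,1,2,3,4} whose edges are the five pairs {i, i+1 mod 5} for i = 0,...,4 together with the full set {0,1,2,3,4} (a 5-cycle with one hyperedge containing all 5 vertices) is a Šoltés hypergraph, with W(H) = W(H \ v) = 10 for every vertex v. -/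
variable {α : Type*} {β : Type*}

/-- A hypergraph: a finite vertex set together with a set of edges,
each an at-least-2-element subset of the vertex set. -/
structure FinHypergraph (α : Type*) where
  verts : Finset α
  edges : Finset (Finset α)
  edge_sub : ∀ e ∈ edges, e ⊆ verts
  edge_card : ∀ e ∈ edges, 2 ≤ e.card

namespace FinHypergraph

/-- The 2-section graph of a hypergraph: two distinct vertices are adjacent
iff some edge contains both. -/
def twoSection (H : FinHypergraph α) : SimpleGraph α where
  Adj u v := u ≠ v ∧ ∃ e ∈ H.edges, u ∈ e ∧ v ∈ e
  symm := ⟨by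
    rintro u v ⟨huv, e, he, hu, hv⟩
    exact ⟨huv.symm, e, he, hv, hu⟩⟩
  loopless := ⟨by
    rintro u ⟨h, -⟩
    exact h rfl⟩

/-- Distance between two vertices: graph distance in the 2-section. -/
noncomputable def dist (H : FinHypergraph α) (u v : α) : ℕ :=
  H.twoSection.dist u v

/-- A hypergraph is connected if every two of its vertices are joined by a path. -/
def Connected (H : FinHypergraph α) : Prop :=
  ∀ u ∈ H.verts, ∀ v ∈ H.verts, H.twoSection.Reachable u v

/-- The Wiener index (total distance): the sum of distances over all
unordered pairs of distinct vertices. -/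
noncomputable def wiener [DecidableEq α] (H : FinHypergraph α) : ℕ :=
  ∑ p ∈ H.verts.sym2.filter (fun p => ¬ p.IsDiag),
    Sym2.lift ⟨fun u v => H.dist u v, fun _ _ => SimpleGraph.dist_comm⟩ p

/-- Vertex deletion: remove the vertex and all edges containing it. -/
def delete [DecidableEq α] (H : FinHypergraph α) (v : α) : FinHypergraph α where
  verts := H.verts.erase v
  edges := H.edges.filter fun e => v ∉ e
  edge_sub := by
    intro e he x hx
    rw [Finset.mem_filter] at he
    exact Finset.mem_erase.mpr ⟨fun h => he.2 (h ▸ hx), H.edge_sub e he.1 hx⟩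
  edge_card := fun e he => H.edge_card e (Finset.mem_filter.mp he).1

/-- A Šoltés hypergraph: a connected hypergraph on at least 2 vertices such that
deleting any vertex leaves a connected hypergraph with the same Wiener index. -/
def IsSoltes [DecidableEq α] (H : FinHypergraph α) : Prop :=
  2 ≤ H.verts.card ∧ H.Connected ∧
    ∀ v ∈ H.verts, (H.delete v).Connected ∧ (H.delete v).wiener = H.wiener

/-- The diameter: the maximum distance over unordered pairs of distinct vertices. -/
noncomputable def diam [DecidableEq α] (H : FinHypergraph α) : ℕ :=
  H.verts.offDiag.sup fun p => H.dist p.1 p.2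

/-- The degree of a vertex: the number of edges containing it. -/
def degree [DecidableEq α] (H : FinHypergraph α) (v : α) : ℕ :=
  (H.edges.filter fun e => v ∈ e).card

/-- FinHypergraph isomorphism: a bijection between the vertex sets mapping
edges onto edges. -/
def IsIsoTo [DecidableEq β] (H : FinHypergraph α) (H' : FinHypergraph β) : Prop :=
  ∃ f : α → β, Set.InjOn f ↑H.verts ∧ H'.verts = H.verts.image f ∧
    H'.edges = H.edges.image fun e => e.image f

end FinHypergraph

/-- The 5-cycle together with one hyperedge containing all 5 vertices. -/
def cycleFivePlus : FinHypergraph (Fin 5) where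
  verts := Finset.univ
  edges := (Finset.univ.image fun i : Fin 5 => ({i, i + 1} : Finset (Fin 5))) ∪ {Finset.univ}
  edge_sub := by decide
  edge_card := by decide

section Aux

open SimpleGraph

lemma adj_of {H : FinHypergraph α} {u v : α}
    (h : u ≠ v ∧ ∃ e ∈ H.edges, u ∈ e ∧ v ∈ e) : H.twoSection.Adj u v := h

lemma not_adj_of {H : FinHypergraph α} {u v : α}
    (h : ¬ (u ≠ v ∧ ∃ e ∈ H.edges, u ∈ e ∧ v ∈ e)) : ¬ H.twoSection.Adj u v := h

lemma mid_of {H : FinHypergraph α} {u v : α}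
    (h : ∀ x, ¬ ((u ≠ x ∧ ∃ e ∈ H.edges, u ∈ e ∧ x ∈ e) ∧
        (x ≠ v ∧ ∃ e ∈ H.edges, x ∈ e ∧ v ∈ e))) :
    ∀ x, ¬ (H.twoSection.Adj u x ∧ H.twoSection.Adj x v) := h

lemma dist2 {V} {G : SimpleGraph V} {u v w : V} (hne : u ≠ v) (huv : ¬ G.Adj u v)
    (h1 : G.Adj u w) (h2 : G.Adj w v) : G.dist u v = 2 := by
  have hle : G.dist u v ≤ 2 := by
    simpa using G.dist_le (h1.toWalk.append h2.toWalk)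
  have h0 : G.dist u v ≠ 0 :=
    SimpleGraph.dist_ne_zero_iff_ne_and_reachable.mpr ⟨hne, (h1.reachable.trans h2.reachable)⟩
  have h1' : G.dist u v ≠ 1 := fun h => huv (SimpleGraph.dist_eq_one_iff_adj.mp h)
  omega

lemma dist3 {V} {G : SimpleGraph V} {u v w w' : V} (hne : u ≠ v) (huv : ¬ G.Adj u v)
    (hmid : ∀ x, ¬ (G.Adj u x ∧ G.Adj x v))
    (h1 : G.Adj u w) (h2 : G.Adj w w') (h3 : G.Adj w' v) : G.dist u v = 3 := by
  have hle : G.dist u v ≤ 3 := by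
    simpa using G.dist_le ((h1.toWalk.append h2.toWalk).append h3.toWalk)
  have h0 : G.dist u v ≠ 0 :=
    SimpleGraph.dist_ne_zero_iff_ne_and_reachable.mpr
      ⟨hne, ((h1.reachable.trans h2.reachable).trans h3.reachable)⟩
  have h1' : G.dist u v ≠ 1 := fun h => huv (SimpleGraph.dist_eq_one_iff_adj.mp h)
  have h2' : G.dist u v ≠ 2 := by
    intro h
    obtain ⟨p, hp⟩ := SimpleGraph.exists_walk_of_dist_ne_zero h0
    rw [h] at hp
    cases p with
    | nil => simp at hp
    | cons ha q =>
      cases q with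
      | nil => simp at hp
      | cons hb r =>
        cases r with
        | nil => exact hmid _ ⟨ha, hb⟩
        | cons _ _ => simp [SimpleGraph.Walk.length_cons] at hp
  omega

/-- path distance function in the deleted graph -/
def pd (v a b : Fin 5) : ℕ := Nat.dist ((a - v : Fin 5) : ℕ) ((b - v : Fin 5) : ℕ)

lemma pd_comm (v a b : Fin 5) : pd v a b = pd v b a := Nat.dist_comm _ _

lemma hdistH : ∀ u v : Fin 5, u ≠ v → cycleFivePlus.dist u v = 1 := by
  intro u v h
  exact SimpleGraph.dist_eq_one_iff_adj.mpr
    (adj_of ⟨h, Finset.univ, by decide, Finset.mem_univ u, Finset.mem_univ v⟩)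

lemma delete_dist : ∀ v a b : Fin 5, v ≠ a → v ≠ b → a ≠ b →
    (cycleFivePlus.delete v).dist a b = pd v a b := by
  intro v a b hva hvb hab
  fin_cases v <;> fin_cases a <;> fin_cases b <;>
  first
    | exact absurd rfl hva
    | exact absurd rfl hvb
    | exact absurd rfl hab
    | exact (SimpleGraph.dist_eq_one_iff_adj.mpr (adj_of (by decide))).trans (by decide)
    | exact (dist2 (w := 0) (by decide) (not_adj_of (by decide)) (adj_of (by decide)) (adj_of (by decide))).trans (by decide)
    | exact (dist2 (w := 1) (by decide) (not_adj_of (by decide)) (adj_of (by decide)) (adj_of (by decide))).trans (by decide)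
    | exact (dist2 (w := 2) (by decide) (not_adj_of (by decide)) (adj_of (by decide)) (adj_of (by decide))).trans (by decide)
    | exact (dist2 (w := 3) (by decide) (not_adj_of (by decide)) (adj_of (by decide)) (adj_of (by decide))).trans (by decide)
    | exact (dist2 (w := 4) (by decide) (not_adj_of (by decide)) (adj_of (by decide)) (adj_of (by decide))).trans (by decide)
    | exact (dist3 (w := 1) (w' := 2) (by decide) (not_adj_of (by decide)) (mid_of (by decide)) (adj_of (by decide)) (adj_of (by decide)) (adj_of (by decide))).trans (by decide)
    | exact (dist3 (w := 2) (w' := 1) (by decide) (not_adj_of (by decide)) (mid_of (by decide)) (adj_of (by decide)) (adj_of (by decide)) (adj_of (by decide))).trans (by decide)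
    | exact (dist3 (w := 2) (w' := 3) (by decide) (not_adj_of (by decide)) (mid_of (by decide)) (adj_of (by decide)) (adj_of (by decide)) (adj_of (by decide))).trans (by decide)
    | exact (dist3 (w := 3) (w' := 2) (by decide) (not_adj_of (by decide)) (mid_of (by decide)) (adj_of (by decide)) (adj_of (by decide)) (adj_of (by decide))).trans (by decide)
    | exact (dist3 (w := 3) (w' := 4) (by decide) (not_adj_of (by decide)) (mid_of (by decide)) (adj_of (by decide)) (adj_of (by decide)) (adj_of (by decide))).trans (by decide)
    | exact (dist3 (w := 4) (w' := 3) (by decide) (not_adj_of (by decide)) (mid_of (by decide)) (adj_of (by decide)) (adj_of (by decide)) (adj_of (by decide))).trans (by decide)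
    | exact (dist3 (w := 4) (w' := 0) (by decide) (not_adj_of (by decide)) (mid_of (by decide)) (adj_of (by decide)) (adj_of (by decide)) (adj_of (by decide))).trans (by decide)
    | exact (dist3 (w := 0) (w' := 4) (by decide) (not_adj_of (by decide)) (mid_of (by decide)) (adj_of (by decide)) (adj_of (by decide)) (adj_of (by decide))).trans (by decide)
    | exact (dist3 (w := 0) (w' := 1) (by decide) (not_adj_of (by decide)) (mid_of (by decide)) (adj_of (by decide)) (adj_of (by decide)) (adj_of (by decide))).trans (by decide)
    | exact (dist3 (w := 1) (w' := 0) (by decide) (not_adj_of (by decide)) (mid_of (by decide)) (adj_of (by decide)) (adj_of (by decide)) (adj_of (by decide))).trans (by decide)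

lemma wienerH : cycleFivePlus.wiener = 10 := by
  unfold FinHypergraph.wiener
  rw [Finset.sum_congr rfl (fun p hp => ?_), Finset.sum_const, smul_eq_mul, mul_one]
  · decide
  · induction p using Sym2.ind with
    | _ a b =>
      simp only [Finset.mem_filter, Sym2.mk_isDiag_iff] at hp
      exact hdistH a b hp.2

lemma wienerDel : ∀ v : Fin 5, (cycleFivePlus.delete v).wiener = 10 := by
  intro v
  unfold FinHypergraph.wiener
  rw [Finset.sum_congr rfl (fun p hp => ?_)
    (g := fun p => Sym2.lift ⟨pd v, fun a b => pd_comm v a b⟩ p)]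
  · revert v; decide
  · induction p using Sym2.ind with
    | _ a b =>
      simp only [Finset.mem_filter, Sym2.mk_isDiag_iff, Finset.mk_mem_sym2_iff,
        FinHypergraph.delete, Finset.mem_erase] at hp
      exact delete_dist v a b (Ne.symm hp.1.1.1) (Ne.symm hp.1.2.1) hp.2

lemma pd_ne_zero : ∀ v a b : Fin 5, a ≠ b → pd v a b ≠ 0 := by decide

end Aux

theorem stmt3 : cycleFivePlus.IsSoltes ∧ cycleFivePlus.wiener = 10 ∧
    ∀ v ∈ cycleFivePlus.verts, (cycleFivePlus.delete v).wiener = 10 := by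
  have hW : cycleFivePlus.wiener = 10 := wienerH
  have hconnDel : ∀ v : Fin 5, (cycleFivePlus.delete v).Connected := by
    intro v a ha b hb
    rcases eq_or_ne a b with rfl | hab
    · exact SimpleGraph.Reachable.refl a
    · have hva : v ≠ a := (Ne.symm ((Finset.mem_erase.mp ha).1))
      have hvb : v ≠ b := (Ne.symm ((Finset.mem_erase.mp hb).1))
      have hd := delete_dist v a b hva hvb hab
      exact SimpleGraph.Reachable.of_dist_ne_zero
        (by rw [show (cycleFivePlus.delete v).twoSection.dist a b
            = (cycleFivePlus.delete v).dist a b from rfl, hd]; exact pd_ne_zero v a b hab)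
  refine ⟨⟨by decide, ?_, fun v _ => ⟨hconnDel v, (wienerDel v).trans hW.symm⟩⟩, hW,
    fun v _ => wienerDel v⟩
  intro a _ b _
  rcases eq_or_ne a b with rfl | hab
  · exact SimpleGraph.Reachable.refl a
  · exact (adj_of ⟨hab, Finset.univ, by decide, Finset.mem_univ a, Finset.mem_univ b⟩).reachable
end

section
/- Let m ≥ 4, let k = C(m,2) and n = C(m+1,2) + 1, and let H be the hypergraph on vertex set Z/nZ whose edges are the n sets {i, i+1, ..., i+k-1} (taken modulo n) for i ∈ Z/nZ. Then H is a k-uniform Šoltés hypergraph; moreover H has diameter 1, W(H) = C(n,2), and W(H \ v) = C(n-1,2) + C(m+1,2) = C(n,2) for every vertex v. -/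
variable {α : Type*} {β : Type*}

open Finset

namespace SoltesAux

variable {n k : ℕ} [NeZero n]

lemma mem_interval_iff (hkn : k < n) (i x : ZMod n) :
    x ∈ Finset.image (fun j : Fin k => i + ((j:ℕ) : ZMod n)) Finset.univ ↔ (x - i).val < k := by
  simp only [Finset.mem_image, Finset.mem_univ, true_and]
  constructor
  · rintro ⟨j, rfl⟩
    simpa [ZMod.val_cast_of_lt (lt_trans j.2 hkn)] using j.2
  · intro h
    exact ⟨⟨(x - i).val, h⟩, by simp [ZMod.natCast_rightInverse (x - i)]⟩

lemma val_offset {x v : ZMod n} {s : ℕ} (hs1 : s ≤ (x - v).val) :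
    (x - (v + (s : ZMod n))).val = (x - v).val - s := by
  have h2 : ((x - v).val : ZMod n) = x - v := ZMod.natCast_rightInverse _
  have h1 : x - (v + (s : ZMod n)) = (((x - v).val - s : ℕ) : ZMod n) := by
    rw [Nat.cast_sub hs1, h2]; ring
  rw [h1, ZMod.val_cast_of_lt (lt_of_le_of_lt (Nat.sub_le _ _) (ZMod.val_lt _))]

lemma val_shift {v : ZMod n} {s : ℕ} (hs : s < n) :
    ((v + (s : ZMod n)) - v).val = s := by
  have : (v + (s : ZMod n)) - v = (s : ZMod n) := by ring
  rw [this, ZMod.val_cast_of_lt hs]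

lemma val_wrap (i x v : ZMod n) (hlt : (x - i).val < (v - i).val) :
    (x - v).val = (x - i).val + n - (v - i).val := by
  set p := (x - i).val with hp
  set s := (v - i).val with hs
  have hsn : s < n := ZMod.val_lt _
  have hcast : ((p + n - s : ℕ) : ZMod n) = x - v := by
    have h1 : (p : ZMod n) = x - i := ZMod.natCast_rightInverse _
    have h2 : (s : ZMod n) = v - i := ZMod.natCast_rightInverse _
    rw [Nat.cast_sub (by omega : s ≤ p + n)]
    push_cast
    rw [h1, h2, ZMod.natCast_self]
    ring
  rw [← hcast, ZMod.val_cast_of_lt (by omega)]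

lemma ne_iff_val_ne (x v : ZMod n) : x ≠ v ↔ (x - v).val ≠ 0 := by
  rw [Ne, Ne, ← sub_eq_zero (a := x), ← ZMod.val_eq_zero]

end SoltesAux
section ADJ
open Finset
open SoltesAux

variable {n k m : ℕ} [NeZero n]

/-- Adjacency in the 2-section of the full hypergraph: any two distinct vertices. -/
lemma adj_full (hn : n = k + m + 1) (hk : m + 2 ≤ k)
    (H : Hypergraph' (ZMod n))
    (hedges : H.edges = Finset.image
      (fun i : ZMod n => Finset.image (fun j : Fin k => i + ((j : ℕ) : ZMod n)) Finset.univ)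
      Finset.univ)
    {x y : ZMod n} (hxy : x ≠ y) : H.twoSection.Adj x y := by
  have hkn : k < n := by omega
  have hedge : ∀ i : ZMod n,
      Finset.image (fun j : Fin k => i + ((j : ℕ) : ZMod n)) Finset.univ ∈ H.edges := by
    intro i
    rw [hedges]
    exact Finset.mem_image.2 ⟨i, Finset.mem_univ _, rfl⟩
  have hdy : (y - x).val ≠ 0 := (ne_iff_val_ne y x).1 hxy.symm
  by_cases hd : (y - x).val < k
  · refine ⟨hxy, _, hedge x, ?_, ?_⟩
    · rw [mem_interval_iff hkn]; simp; omega
    · rw [mem_interval_iff hkn]; exact hd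
  · refine ⟨hxy, _, hedge y, ?_, ?_⟩
    · rw [mem_interval_iff hkn]
      have h1 : x - y = -(y - x) := by ring
      rw [h1, ZMod.neg_val, if_neg (by simpa [← ZMod.val_eq_zero] using hdy)]
      have := ZMod.val_lt (y - x)
      omega
    · rw [mem_interval_iff hkn]; simp; omega

/-- Adjacency characterization in the 2-section of the deleted hypergraph. -/
lemma adj_del (hn : n = k + m + 1) (hk : m + 2 ≤ k)
    (H : Hypergraph' (ZMod n))
    (hedges : H.edges = Finset.image
      (fun i : ZMod n => Finset.image (fun j : Fin k => i + ((j : ℕ) : ZMod n)) Finset.univ)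
      Finset.univ)
    (v x y : ZMod n) (hx : x ≠ v) (hy : y ≠ v) :
    (H.delete v).twoSection.Adj x y ↔ x ≠ y ∧
      max (x - v).val (y - v).val - min (x - v).val (y - v).val < k := by
  have hkn : k < n := by omega
  have ha0 : (x - v).val ≠ 0 := (ne_iff_val_ne x v).1 hx
  have hb0 : (y - v).val ≠ 0 := (ne_iff_val_ne y v).1 hy
  have han : (x - v).val < n := ZMod.val_lt _
  have hbn : (y - v).val < n := ZMod.val_lt _
  constructor
  · rintro ⟨hxy, e, he, hxe, hye⟩
    refine ⟨hxy, ?_⟩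
    rw [Hypergraph'.delete, Finset.mem_filter] at he
    obtain ⟨heH, hve⟩ := he
    rw [hedges, Finset.mem_image] at heH
    obtain ⟨i, -, rfl⟩ := heH
    rw [mem_interval_iff hkn] at hxe hye
    have hvi : ¬ (v - i).val < k := by
      intro h; exact hve ((mem_interval_iff hkn i v).2 h)
    have hax := val_wrap i x v (by omega)
    have hay := val_wrap i y v (by omega)
    have := ZMod.val_lt (v - i)
    omega
  · rintro ⟨hxy, hgap⟩
    set a := (x - v).val with hadef
    set b := (y - v).val with hbdef
    set s := min (min a b) (m + 1) with hsdef
    have hs1 : 1 ≤ s := by omega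
    have hsm : s ≤ m + 1 := by omega
    have hsn : s < n := by omega
    have hsa : s ≤ a := by omega
    have hsb : s ≤ b := by omega
    refine ⟨hxy, Finset.image (fun j : Fin k => (v + (s : ZMod n)) + ((j : ℕ) : ZMod n))
      Finset.univ, ?_, ?_, ?_⟩
    · rw [Hypergraph'.delete, Finset.mem_filter]
      constructor
      · rw [hedges]; exact Finset.mem_image.2 ⟨_, Finset.mem_univ _, rfl⟩
      · rw [mem_interval_iff hkn]
        have h1 : v - (v + (s : ZMod n)) = -(s : ZMod n) := by ring
        rw [h1, ZMod.neg_val, if_neg (by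
          simp only [Ne, ← ZMod.val_eq_zero, ZMod.val_cast_of_lt hsn]; omega),
          ZMod.val_cast_of_lt hsn]
        omega
    · rw [mem_interval_iff hkn, val_offset hsa, ← hadef]; omega
    · rw [mem_interval_iff hkn, val_offset hsb, ← hbdef]; omega

end ADJ
section DIST
open Finset
open SoltesAux

variable {n k m : ℕ} [NeZero n]

lemma dist_del (hn : n = k + m + 1) (hk : m + 2 ≤ k)
    (H : Hypergraph' (ZMod n))
    (hedges : H.edges = Finset.image
      (fun i : ZMod n => Finset.image (fun j : Fin k => i + ((j : ℕ) : ZMod n)) Finset.univ)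
      Finset.univ)
    (v x y : ZMod n) (hx : x ≠ v) (hy : y ≠ v) (hxy : x ≠ y) :
    (H.delete v).twoSection.dist x y =
      if max (x - v).val (y - v).val - min (x - v).val (y - v).val < k then 1 else 2 := by
  set a := (x - v).val with hadef
  set b := (y - v).val with hbdef
  have ha0 : a ≠ 0 := (ne_iff_val_ne x v).1 hx
  have hb0 : b ≠ 0 := (ne_iff_val_ne y v).1 hy
  have han : a < n := ZMod.val_lt _
  have hbn : b < n := ZMod.val_lt _
  by_cases hgap : max a b - min a b < k
  · rw [if_pos hgap]
    exact SimpleGraph.dist_eq_one_iff_adj.2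
      ((adj_del hn hk H hedges v x y hx hy).2 ⟨hxy, hgap⟩)
  · rw [if_neg hgap]
    set c := min a b + (k - 1) with hcdef
    have hcn : c < n := by omega
    set w := v + ((c : ℕ) : ZMod n) with hwdef
    have hwv : (w - v).val = c := val_shift hcn
    have hxw : x ≠ w := by
      intro h; rw [h] at hadef; rw [hwv] at hadef; omega
    have hyw : y ≠ w := by
      intro h; rw [h] at hbdef; rw [hwv] at hbdef; omega
    have hwv' : w ≠ v := (ne_iff_val_ne w v).2 (by rw [hwv]; omega)
    have adj1 : (H.delete v).twoSection.Adj x w :=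
      (adj_del hn hk H hedges v x w hx hwv').2 ⟨hxw, by rw [hwv, ← hadef]; omega⟩
    have adj2 : (H.delete v).twoSection.Adj w y :=
      (adj_del hn hk H hedges v w y hwv' hy).2
        ⟨fun h => hyw h.symm, by rw [hwv, ← hbdef]; omega⟩
    have hwalk : (H.delete v).twoSection.Walk x y := adj1.toWalk.append adj2.toWalk
    have hle : (H.delete v).twoSection.dist x y ≤ 2 := by
      have := SimpleGraph.dist_le (adj1.toWalk.append adj2.toWalk)
      simpa [SimpleGraph.Adj.toWalk, SimpleGraph.Walk.length_append] using this
    have hne1 : (H.delete v).twoSection.dist x y ≠ 1 := by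
      rw [Ne, SimpleGraph.dist_eq_one_iff_adj, adj_del hn hk H hedges v x y hx hy]
      rintro ⟨-, h⟩; exact hgap h
    have hne0 : (H.delete v).twoSection.dist x y ≠ 0 :=
      SimpleGraph.dist_ne_zero_iff_ne_and_reachable.2 ⟨hxy, ⟨hwalk⟩⟩
    omega

lemma card_sym2_not_diag {γ : Type*} [DecidableEq γ] (s : Finset γ) :
    ((s.sym2).filter fun p => ¬ p.IsDiag).card = s.card.choose 2 := by
  have h : (s.sym2).filter (fun p => ¬ p.IsDiag) = s.offDiag.image Sym2.mk.uncurry := by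
    ext z
    induction z with
    | _ x y =>
      simp only [Finset.mem_filter, Finset.mk_mem_sym2_iff, Sym2.mk_isDiag_iff,
        Finset.mem_image, Finset.mem_offDiag, Prod.exists, Function.uncurry_apply_pair]
      constructor
      · rintro ⟨⟨hx, hy⟩, hne⟩; exact ⟨x, y, ⟨hx, hy, hne⟩, rfl⟩
      · rintro ⟨p, q, ⟨hp, hq, hpq⟩, h⟩
        rw [Sym2.eq_iff] at h
        rcases h with ⟨rfl, rfl⟩ | ⟨rfl, rfl⟩
        · exact ⟨⟨hp, hq⟩, hpq⟩
        · exact ⟨⟨hq, hp⟩, fun h => hpq h.symm⟩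
  rw [h, Sym2.card_image_offDiag]

lemma sum_Icc_id_eq (m : ℕ) : ∑ i ∈ Finset.Icc 1 m, i = (m + 1).choose 2 := by
  induction m with
  | zero => simp
  | succ m ih =>
    rw [Finset.sum_Icc_succ_top (by omega), ih]
    have h2 : (m + 1 + 1).choose (1 + 1) = (m + 1).choose 1 + (m + 1).choose (1 + 1) :=
      Nat.choose_succ_succ _ _
    rw [Nat.choose_one_right] at h2
    norm_num at h2 ⊢
    omega

end DIST
section FAR
open Finset
open SoltesAux

variable {n k m : ℕ} [NeZero n]

/-- offset of the smaller endpoint -/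
noncomputable def minS (v : ZMod n) : Sym2 (ZMod n) → ℕ :=
  Sym2.lift ⟨fun x y => min (x - v).val (y - v).val, fun x y => by simp [min_comm]⟩

noncomputable def maxS (v : ZMod n) : Sym2 (ZMod n) → ℕ :=
  Sym2.lift ⟨fun x y => max (x - v).val (y - v).val, fun x y => by simp [max_comm]⟩

@[simp] lemma minS_mk (v x y : ZMod n) :
    minS v s(x, y) = min (x - v).val (y - v).val := rfl

@[simp] lemma maxS_mk (v x y : ZMod n) :
    maxS v s(x, y) = max (x - v).val (y - v).val := rfl

lemma card_far (hn : n = k + m + 1) (hk : m + 2 ≤ k) (v : ZMod n) :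
    ((((Finset.univ.erase v).sym2).filter fun p => ¬ p.IsDiag).filter
        fun p => ¬ (maxS v p - minS v p < k)).card = (m + 1).choose 2 := by
  classical
  have key : ((((Finset.univ.erase v).sym2).filter fun p => ¬ p.IsDiag).filter
        fun p => ¬ (maxS v p - minS v p < k)).card
      = ((Finset.Icc 1 m).sigma fun t => Finset.Icc 1 t).card := by
    apply Finset.card_nbij' (i := fun p => (⟨maxS v p - k, minS v p⟩ : Σ _ : ℕ, ℕ))
      (j := fun q => s(v + ((q.2 : ℕ) : ZMod n), v + ((k + q.1 : ℕ) : ZMod n)))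
    · intro p hp
      induction p using Sym2.ind with
      | _ x y =>
        simp only [Finset.mem_coe, Finset.mem_filter, Finset.mk_mem_sym2_iff, Finset.mem_erase,
          Sym2.mk_isDiag_iff, maxS_mk, minS_mk] at hp
        obtain ⟨⟨⟨⟨hxv, -⟩, hyv, -⟩, hxy⟩, hfar⟩ := hp
        have ha0 : (x - v).val ≠ 0 := (ne_iff_val_ne x v).1 hxv
        have hb0 : (y - v).val ≠ 0 := (ne_iff_val_ne y v).1 hyv
        have han : (x - v).val < n := ZMod.val_lt _
        have hbn : (y - v).val < n := ZMod.val_lt _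
        simp only [Finset.mem_coe, maxS_mk, minS_mk, Finset.mem_sigma, Finset.mem_Icc]
        omega
    · intro q hq
      obtain ⟨t, a⟩ := q
      simp only [Finset.mem_coe, Finset.mem_sigma, Finset.mem_Icc] at hq
      obtain ⟨⟨ht1, htm⟩, ha1, hat⟩ := hq
      have han : a < n := by omega
      have hktn : k + t < n := by omega
      have hv1 : ((v + ((a : ℕ) : ZMod n)) - v).val = a := val_shift han
      have hv2 : ((v + ((k + t : ℕ) : ZMod n)) - v).val = k + t := val_shift hktn
      simp only [Finset.mem_coe, Finset.mem_filter, Finset.mk_mem_sym2_iff, Finset.mem_erase,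
        Sym2.mk_isDiag_iff, maxS_mk, minS_mk, Finset.mem_univ, and_true]
      refine ⟨⟨⟨?_, ?_⟩, ?_⟩, ?_⟩
      · exact (ne_iff_val_ne _ v).2 (by rw [hv1]; omega)
      · exact (ne_iff_val_ne _ v).2 (by rw [hv2]; omega)
      · intro h
        have := congrArg (fun z => (z - v).val) h
        simp only [hv1, hv2] at this
        omega
      · rw [hv1, hv2]; omega
    · intro p hp
      induction p using Sym2.ind with
      | _ x y =>
        simp only [Finset.mem_coe, Finset.mem_filter, Finset.mk_mem_sym2_iff, Finset.mem_erase,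
          Sym2.mk_isDiag_iff, maxS_mk, minS_mk] at hp
        obtain ⟨⟨⟨⟨hxv, -⟩, hyv, -⟩, hxy⟩, hfar⟩ := hp
        have ha0 : (x - v).val ≠ 0 := (ne_iff_val_ne x v).1 hxv
        have hb0 : (y - v).val ≠ 0 := (ne_iff_val_ne y v).1 hyv
        have han : (x - v).val < n := ZMod.val_lt _
        have hbn : (y - v).val < n := ZMod.val_lt _
        have hxval : v + (((x - v).val : ℕ) : ZMod n) = x := by
          rw [ZMod.natCast_rightInverse (x - v)]; ring
        have hyval : v + (((y - v).val : ℕ) : ZMod n) = y := by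
          rw [ZMod.natCast_rightInverse (y - v)]; ring
        simp only [maxS_mk, minS_mk]
        rcases le_total ((x - v).val) ((y - v).val) with hab | hab
        · rw [min_eq_left hab, max_eq_right hab,
            show k + ((y - v).val - k) = (y - v).val by omega, hxval, hyval]
        · rw [min_eq_right hab, max_eq_left hab,
            show k + ((x - v).val - k) = (x - v).val by omega, hyval, hxval,
            Sym2.eq_swap]
    · intro q hq
      obtain ⟨t, a⟩ := q
      simp only [Finset.mem_coe, Finset.mem_sigma, Finset.mem_Icc] at hq
      obtain ⟨⟨ht1, htm⟩, ha1, hat⟩ := hq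
      have han : a < n := by omega
      have hktn : k + t < n := by omega
      have hv1 : ((v + ((a : ℕ) : ZMod n)) - v).val = a := val_shift han
      have hv2 : ((v + ((k + t : ℕ) : ZMod n)) - v).val = k + t := val_shift hktn
      simp only [maxS_mk, minS_mk, hv1, hv2]
      rw [show a ⊔ (k + t) - k = t by omega, show a ⊓ (k + t) = a by omega]
  rw [key, Finset.card_sigma]
  have : ∀ t ∈ Finset.Icc 1 m, (Finset.Icc 1 t).card = t := by
    intro t _; rw [Nat.card_Icc]; omega
  rw [Finset.sum_congr rfl this, sum_Icc_id_eq]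

end FAR

theorem stmt6 (m : ℕ) (hm : 4 ≤ m)
    (H : Hypergraph' (ZMod ((m + 1).choose 2 + 1)))
    (hverts : H.verts = Finset.univ)
    (hedges : H.edges = Finset.image
      (fun i : ZMod ((m + 1).choose 2 + 1) =>
        Finset.image
          (fun j : Fin (m.choose 2) => i + ((j : ℕ) : ZMod ((m + 1).choose 2 + 1)))
          Finset.univ)
      Finset.univ) :
    H.IsSoltes ∧ (∀ e ∈ H.edges, e.card = m.choose 2) ∧ H.diam = 1 ∧
      H.wiener = ((m + 1).choose 2 + 1).choose 2 ∧
      ∀ v ∈ H.verts,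
        (H.delete v).wiener = ((m + 1).choose 2).choose 2 + (m + 1).choose 2 := by
  classical
  have hc : (m + 1).choose 2 = m.choose 2 + m := by
    have h2 := Nat.choose_succ_succ m 1
    rw [Nat.choose_one_right] at h2
    norm_num at h2
    omega
  have hk : m + 2 ≤ m.choose 2 := by
    obtain ⟨a, rfl⟩ := Nat.exists_eq_add_of_le hm
    rw [Nat.choose_two_right, show 4 + a - 1 = 3 + a by omega,
      Nat.le_div_iff_mul_le (by norm_num)]
    nlinarith
  have hn : (m + 1).choose 2 + 1 = m.choose 2 + m + 1 := by omega
  haveI : Fact (1 < (m + 1).choose 2 + 1) := ⟨by omega⟩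
  have hkn : m.choose 2 < (m + 1).choose 2 + 1 := by omega
  have hcard : Fintype.card (ZMod ((m + 1).choose 2 + 1)) = (m + 1).choose 2 + 1 := ZMod.card _
  have adjF : ∀ x y : ZMod ((m + 1).choose 2 + 1), x ≠ y → H.twoSection.Adj x y :=
    fun x y h => adj_full hn hk H hedges h
  have distF : ∀ x y : ZMod ((m + 1).choose 2 + 1), x ≠ y → H.dist x y = 1 :=
    fun x y h => SimpleGraph.dist_eq_one_iff_adj.2 (adjF x y h)
  have hch : ((m + 1).choose 2 + 1).choose 2
      = ((m + 1).choose 2).choose 2 + (m + 1).choose 2 := by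
    have h2 := Nat.choose_succ_succ ((m + 1).choose 2) 1
    rw [Nat.choose_one_right] at h2
    norm_num at h2
    omega
  -- edge cardinality
  have hedgecard : ∀ e ∈ H.edges, e.card = m.choose 2 := by
    intro e he
    rw [hedges, Finset.mem_image] at he
    obtain ⟨i, -, rfl⟩ := he
    have hinj : Function.Injective
        (fun j : Fin (m.choose 2) => i + ((j : ℕ) : ZMod ((m + 1).choose 2 + 1))) := by
      intro j1 j2 h
      simp only at h
      have h2 : ((j1 : ℕ) : ZMod ((m + 1).choose 2 + 1))
          = ((j2 : ℕ) : ZMod ((m + 1).choose 2 + 1)) := add_left_cancel h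
      have h3 := congrArg ZMod.val h2
      rw [ZMod.val_cast_of_lt (lt_trans j1.2 hkn),
        ZMod.val_cast_of_lt (lt_trans j2.2 hkn)] at h3
      exact Fin.ext h3
    rw [Finset.card_image_of_injective _ hinj, Finset.card_univ, Fintype.card_fin]
  -- connectivity
  have hconn : H.Connected := by
    intro u _ w _
    by_cases h : u = w
    · subst h; exact SimpleGraph.Reachable.refl u
    · exact (adjF u w h).reachable
  -- wiener of H
  have hwH : H.wiener = ((m + 1).choose 2 + 1).choose 2 := by
    unfold Hypergraph'.wiener
    rw [hverts]
    have hterm : ∀ p ∈ (Finset.univ.sym2.filter fun p => ¬ p.IsDiag),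
        Sym2.lift ⟨fun u w => H.dist u w, fun _ _ => SimpleGraph.dist_comm⟩ p = 1 := by
      intro p hp
      induction p using Sym2.ind with
      | _ x y =>
        rw [Finset.mem_filter, Sym2.mk_isDiag_iff] at hp
        exact distF x y hp.2
    rw [Finset.sum_congr rfl hterm, Finset.sum_const, smul_eq_mul, mul_one,
      card_sym2_not_diag, Finset.card_univ, hcard]
  -- diameter
  have hdiam : H.diam = 1 := by
    unfold Hypergraph'.diam
    rw [hverts]
    have h01 : (0 : ZMod ((m + 1).choose 2 + 1)) ≠ 1 := zero_ne_one
    apply le_antisymm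
    · apply Finset.sup_le
      intro p hp
      rw [Finset.mem_offDiag] at hp
      exact le_of_eq (distF _ _ hp.2.2)
    · have hmem : ((0 : ZMod ((m + 1).choose 2 + 1)), (1 : ZMod ((m + 1).choose 2 + 1)))
          ∈ (Finset.univ : Finset (ZMod ((m + 1).choose 2 + 1))).offDiag :=
        Finset.mem_offDiag.2 ⟨Finset.mem_univ _, Finset.mem_univ _, h01⟩
      have hle := Finset.le_sup
        (f := fun p : ZMod ((m + 1).choose 2 + 1) × ZMod ((m + 1).choose 2 + 1) =>
          H.dist p.1 p.2) hmem
      simp only at hle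
      rw [distF 0 1 h01] at hle
      exact hle
  -- wiener of deletions
  have hwD : ∀ v : ZMod ((m + 1).choose 2 + 1),
      (H.delete v).wiener = ((m + 1).choose 2).choose 2 + (m + 1).choose 2 := by
    intro v
    unfold Hypergraph'.wiener
    have hverts' : (H.delete v).verts = Finset.univ.erase v := by
      show H.verts.erase v = _
      rw [hverts]
    rw [hverts']
    have hterm : ∀ p ∈ ((Finset.univ.erase v).sym2.filter fun p => ¬ p.IsDiag),
        Sym2.lift ⟨fun u w => (H.delete v).dist u w, fun _ _ => SimpleGraph.dist_comm⟩ p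
          = if maxS v p - minS v p < m.choose 2 then 1 else 2 := by
      intro p hp
      induction p using Sym2.ind with
      | _ x y =>
        rw [Finset.mem_filter, Finset.mk_mem_sym2_iff, Sym2.mk_isDiag_iff] at hp
        obtain ⟨⟨hx, hy⟩, hxy⟩ := hp
        rw [Finset.mem_erase] at hx hy
        simp only [Sym2.lift_mk, maxS_mk, minS_mk]
        exact dist_del hn hk H hedges v x y hx.1 hy.1 hxy
    rw [Finset.sum_congr rfl hterm, Finset.sum_ite, Finset.sum_const, Finset.sum_const,
      smul_eq_mul, smul_eq_mul, mul_one]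
    have hsplit := Finset.card_filter_add_card_filter_not
      (s := (Finset.univ.erase v).sym2.filter fun p => ¬ p.IsDiag)
      (p := fun p => maxS v p - minS v p < m.choose 2)
    have hfar := card_far hn hk v
    have hScard : ((Finset.univ.erase v).sym2.filter fun p => ¬ p.IsDiag).card
        = ((m + 1).choose 2).choose 2 := by
      rw [card_sym2_not_diag, Finset.card_erase_of_mem (Finset.mem_univ v),
        Finset.card_univ, hcard]
      norm_num
    omega
  -- connectivity of deletions
  have hconnD : ∀ v : ZMod ((m + 1).choose 2 + 1), (H.delete v).Connected := by
    intro v x hx y hy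
    have hx' : x ∈ H.verts.erase v := hx
    have hy' : y ∈ H.verts.erase v := hy
    have hxv : x ≠ v := (Finset.mem_erase.1 hx').1
    have hyv : y ≠ v := (Finset.mem_erase.1 hy').1
    by_cases h : x = y
    · subst h; exact SimpleGraph.Reachable.refl x
    · have hd := dist_del hn hk H hedges v x y hxv hyv h
      have hd0 : (H.delete v).twoSection.dist x y ≠ 0 := by
        rw [hd]; split_ifs <;> omega
      exact (SimpleGraph.dist_ne_zero_iff_ne_and_reachable.1 hd0).2
  refine ⟨⟨?_, hconn, fun v _ => ⟨hconnD v, ?_⟩⟩, hedgecard, hdiam, hwH, fun v _ => hwD v⟩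
  · rw [hverts, Finset.card_univ, hcard]; omega
  · rw [hwD v, hwH, hch]
end

section
/- The set of integers k ≥ 2 for which there exists a k-uniform Šoltés hypergraph is infinite. -/
variable {α : Type*} {β : Type*}

namespace SoltesC


def tt (r : ℕ) : ℕ := (2*r+7)*(r+2)
def ss (r : ℕ) : ℕ := 2*r+8
def kk (r : ℕ) : ℕ := tt r + 1
def nn (r : ℕ) : ℕ := tt r + ss r

lemma ss_le_tt (r : ℕ) : ss r + 2 ≤ tt r := by unfold ss tt; nlinarith
lemma tt_ge (r : ℕ) : 14 ≤ tt r := by unfold tt; nlinarith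
lemma nn_eq (r : ℕ) : nn r = tt r + ss r := rfl
lemma nn_le (r : ℕ) : nn r ≤ 2 * tt r + 1 := by
  have := ss_le_tt r; unfold nn at *; omega
lemma nn_ge (r : ℕ) : tt r + 8 ≤ nn r := by unfold nn ss; omega
lemma kk_le_nn (r : ℕ) : kk r ≤ nn r := by unfold kk nn ss; omega
lemma nn_pos (r : ℕ) : 0 < nn r := by have := tt_ge r; have := nn_ge r; omega

/-- coordinate of `x` relative to base point `v`, cyclically. -/
def dc (r v x : ℕ) : ℕ := (x + nn r - v) % nn r

lemma dc_closed (r : ℕ) {v x : ℕ} (hv : v < nn r) (hx : x < nn r) :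
    dc r v x = if v ≤ x then x - v else x + nn r - v := by
  unfold dc
  split_ifs with h
  · have h1 : x + nn r - v = (x - v) + nn r := by omega
    rw [h1, Nat.add_mod_right, Nat.mod_eq_of_lt (by omega)]
  · exact Nat.mod_eq_of_lt (by omega)

lemma dc_lt (r : ℕ) (v x : ℕ) : dc r v x < nn r := Nat.mod_lt _ (nn_pos r)

lemma dc_inj (r : ℕ) {v x y : ℕ} (hv : v < nn r) (hx : x < nn r) (hy : y < nn r)
    (h : dc r v x = dc r v y) : x = y := by
  rw [dc_closed r hv hx, dc_closed r hv hy] at h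
  split_ifs at h <;> omega

lemma dc_self (r : ℕ) {v : ℕ} (hv : v < nn r) : dc r v v = 0 := by
  rw [dc_closed r hv hv]; simp

lemma dc_pos (r : ℕ) {v x : ℕ} (hv : v < nn r) (hx : x < nn r) (hne : x ≠ v) :
    1 ≤ dc r v x := by
  rcases Nat.eq_zero_or_pos (dc r v x) with h | h
  · exact absurd (dc_inj r hv hx hv (by rw [h, dc_self r hv])) hne
  · exact h

lemma dc_vadd (r : ℕ) {v p : ℕ} (hv : v < nn r) (hp : p < nn r) :
    dc r v ((v + p) % nn r) = p := by
  have hn := nn_pos r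
  have hmod : (v + p) % nn r = if v + p < nn r then v + p else v + p - nn r := by
    split_ifs with h
    · exact Nat.mod_eq_of_lt h
    · rw [Nat.mod_eq_sub_mod (by omega), Nat.mod_eq_of_lt (by omega)]
  have hlt : (v + p) % nn r < nn r := Nat.mod_lt _ hn
  rw [dc_closed r hv hlt, hmod]
  split_ifs <;> omega

lemma vadd_dc (r : ℕ) {v x : ℕ} (hv : v < nn r) (hx : x < nn r) :
    (v + dc r v x) % nn r = x := by
  rw [dc_closed r hv hx]
  split_ifs with h
  · have : v + (x - v) = x := by omega
    rw [this, Nat.mod_eq_of_lt hx]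
  · have : v + (x + nn r - v) = x + nn r := by omega
    rw [this, Nat.add_mod_right, Nat.mod_eq_of_lt hx]

def arc (r i : ℕ) : Finset ℕ := (Finset.range (kk r)).image (fun j => (i + j) % nn r)

lemma mem_arc_iff {r i x : ℕ} : x ∈ arc r i ↔ ∃ j < kk r, (i + j) % nn r = x := by
  simp [arc]

lemma arc_card (r i : ℕ) : (arc r i).card = kk r := by
  rw [arc, Finset.card_image_of_injOn, Finset.card_range]
  intro j1 h1 j2 h2 h
  simp only [Finset.coe_range, Set.mem_Iio] at h1 h2
  have hk := kk_le_nn r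
  have : j1 ≡ j2 [MOD nn r] := Nat.ModEq.add_left_cancel' i h
  have := this.eq_of_lt_of_lt (by omega) (by omega)
  exact this

/-- the set of coordinates of an arc, when it stays within `[p, p+t]`. -/
lemma mem_arc_coord (r : ℕ) {v i : ℕ} (hv : v < nn r) (hi : i < nn r)
    (hp1 : 1 ≤ dc r v i) (hp2 : dc r v i + tt r + 1 ≤ nn r) (x : ℕ) :
    x ∈ arc r i ↔ x < nn r ∧ dc r v i ≤ dc r v x ∧ dc r v x ≤ dc r v i + tt r := by
  have hn := nn_pos r
  set p := dc r v i with hpdef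
  have hiv : (v + p) % nn r = i := vadd_dc r hv hi
  constructor
  · rintro hmem
    obtain ⟨j, hj, hx⟩ := mem_arc_iff.mp hmem
    have hjt : j ≤ tt r := by unfold kk at hj; omega
    have hx' : x = (v + (p + j)) % nn r := by
      rw [← hx, ← hiv, Nat.mod_add_mod, add_assoc]
    have hdx : dc r v x = p + j := by
      rw [hx']; exact dc_vadd r hv (by omega)
    exact ⟨by rw [← hx]; exact Nat.mod_lt _ hn, by omega, by omega⟩
  · rintro ⟨hx, h1, h2⟩
    refine mem_arc_iff.mpr ⟨dc r v x - p, by unfold kk; omega, ?_⟩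
    have : (i + (dc r v x - p)) % nn r = (v + (p + (dc r v x - p))) % nn r := by
      rw [← hiv, Nat.mod_add_mod, add_assoc]
    rw [this]
    have : p + (dc r v x - p) = dc r v x := by omega
    rw [this, vadd_dc r hv hx]

def Hg (r : ℕ) : Hypergraph' ℕ where
  verts := Finset.range (nn r)
  edges := (Finset.range (nn r)).image (arc r)
  edge_sub := by
    intro e he x hx
    simp only [Finset.mem_image, Finset.mem_range] at he
    obtain ⟨i, _, rfl⟩ := he
    obtain ⟨j, _, rfl⟩ := mem_arc_iff.mp hx
    exact Finset.mem_range.mpr (Nat.mod_lt _ (nn_pos r))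
  edge_card := by
    intro e he
    simp only [Finset.mem_image, Finset.mem_range] at he
    obtain ⟨i, _, rfl⟩ := he
    rw [arc_card]
    have := tt_ge r; unfold kk; omega

lemma Hg_verts (r : ℕ) : (Hg r).verts = Finset.range (nn r) := rfl

lemma mem_edges_iff {r : ℕ} {e : Finset ℕ} :
    e ∈ (Hg r).edges ↔ ∃ i < nn r, arc r i = e := by
  simp [Hg]

/-- the 2-section of `Hg` is complete on its vertex set -/
lemma adj_all (r : ℕ) {u w : ℕ} (hu : u < nn r) (hw : w < nn r) (hne : u ≠ w) :
    (Hg r).twoSection.Adj u w := by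
  have hn := nn_pos r
  have key : ∀ x y : ℕ, x < nn r → y < nn r → dc r x y ≤ tt r →
      ∃ e ∈ (Hg r).edges, x ∈ e ∧ y ∈ e := by
    intro x y hx hy h
    refine ⟨arc r x, mem_edges_iff.mpr ⟨x, hx, rfl⟩, ?_, ?_⟩
    · exact mem_arc_iff.mpr ⟨0, by unfold kk; omega, by simpa using Nat.mod_eq_of_lt hx⟩
    · exact mem_arc_iff.mpr ⟨dc r x y, by unfold kk; omega, vadd_dc r hx hy⟩
  have hsum : dc r u w + dc r w u = nn r := by
    rw [dc_closed r hu hw, dc_closed r hw hu]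
    split_ifs <;> omega
  have h2t := nn_le r
  rcases le_or_gt (dc r u w) (tt r) with h | h
  · exact ⟨hne, key u w hu hw h⟩
  · obtain ⟨e, he, hx, hy⟩ := key w u hw hu (by omega)
    exact ⟨hne, e, he, hy, hx⟩

/-- adjacency in the deleted hypergraph, in coordinates -/
lemma adj_del_iff (r : ℕ) {v u w : ℕ} (hv : v < nn r) (hu : u < nn r) (hw : w < nn r)
    (huv : u ≠ v) (hwv : w ≠ v) (hne : u ≠ w) :
    ((Hg r).delete v).twoSection.Adj u w ↔
      (dc r v u ≤ dc r v w + tt r ∧ dc r v w ≤ dc r v u + tt r) := by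
  set a := dc r v u with hadef
  set b := dc r v w with hbdef
  have ha1 : 1 ≤ a := dc_pos r hv hu huv
  have hb1 : 1 ≤ b := dc_pos r hv hw hwv
  have haN : a < nn r := dc_lt r v u
  have hbN : b < nn r := dc_lt r v w
  have ht := tt_ge r
  have hge := nn_ge r
  constructor
  · rintro ⟨-, e, he, hue, hwe⟩
    rw [Hypergraph'.delete, Finset.mem_filter] at he
    obtain ⟨he, hve⟩ := he
    obtain ⟨i, hi, rfl⟩ := mem_edges_iff.mp he
    set p := dc r v i with hpdef
    have hp1 : 1 ≤ p := by
      by_contra h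
      have hp0 : p = 0 := by omega
      have : i = v := dc_inj r hv hi hv (by rw [← hpdef, hp0, dc_self r hv])
      exact hve (mem_arc_iff.mpr ⟨0, by unfold kk; omega,
        by simpa [this] using Nat.mod_eq_of_lt hv⟩)
    have hp2 : p + tt r + 1 ≤ nn r := by
      by_contra h
      push_neg at h
      have hpN : p < nn r := dc_lt r v i
      have hji : (i + (nn r - p)) % nn r = v := by
        have hiv : (v + p) % nn r = i := vadd_dc r hv hi
        have : (i + (nn r - p)) % nn r = (v + (p + (nn r - p))) % nn r := by
          rw [← hiv, Nat.mod_add_mod, add_assoc]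
        rw [this]
        have : p + (nn r - p) = nn r := by omega
        rw [this, Nat.add_mod_right, Nat.mod_eq_of_lt hv]
      exact hve (mem_arc_iff.mpr ⟨nn r - p, by unfold kk; omega, hji⟩)
    have hub := (mem_arc_coord r hv hi hp1 hp2 u).mp hue
    have hwb := (mem_arc_coord r hv hi hp1 hp2 w).mp hwe
    omega
  · rintro ⟨h1, h2⟩
    set M := max a b with hM
    set p := if M ≤ tt r then 1 else M - tt r with hp
    have hp1 : 1 ≤ p := by rw [hp]; split_ifs <;> omega
    have hp2 : p + tt r + 1 ≤ nn r := by
      rw [hp]; split_ifs with h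
      · omega
      · have : M = a ∨ M = b := by omega
        rcases this with h' | h' <;> omega
    have hpN : p < nn r := by omega
    set i := (v + p) % nn r with hi
    have hiN : i < nn r := Nat.mod_lt _ (nn_pos r)
    have hpi : dc r v i = p := dc_vadd r hv hpN
    have hcoord := mem_arc_coord r hv hiN (by rw [hpi]; exact hp1) (by rw [hpi]; omega)
    have hbounds : p ≤ a ∧ a ≤ p + tt r ∧ p ≤ b ∧ b ≤ p + tt r := by
      rw [hp]; split_ifs with h <;> omega
    refine ⟨hne, arc r i, ?_, ?_, ?_⟩
    · rw [Hypergraph'.delete, Finset.mem_filter]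
      refine ⟨mem_edges_iff.mpr ⟨i, hiN, rfl⟩, fun hvmem => ?_⟩
      have := (hcoord v).mp hvmem
      rw [hpi, dc_self r hv] at this
      omega
    · exact (hcoord u).mpr ⟨hu, by rw [hpi]; omega⟩
    · exact (hcoord w).mpr ⟨hw, by rw [hpi]; omega⟩



lemma dist_del (r : ℕ) {v u w : ℕ} (hv : v < nn r) (hu : u < nn r) (hw : w < nn r)
    (huv : u ≠ v) (hwv : w ≠ v) (hne : u ≠ w) :
    ((Hg r).delete v).twoSection.dist u w =
      if dc r v u ≤ dc r v w + tt r ∧ dc r v w ≤ dc r v u + tt r then 1 else 2 := by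
  set a := dc r v u with hadef
  set b := dc r v w with hbdef
  have ha1 : 1 ≤ a := dc_pos r hv hu huv
  have hb1 : 1 ≤ b := dc_pos r hv hw hwv
  have haN : a < nn r := dc_lt r v u
  have hbN : b < nn r := dc_lt r v w
  have ht := tt_ge r
  have h2t := nn_le r
  split_ifs with h
  · exact SimpleGraph.dist_eq_one_iff_adj.mpr
      ((adj_del_iff r hv hu hw huv hwv hne).mpr h)
  · -- far case
    have hfar : b + tt r < a ∨ a + tt r < b := by omega
    set q := max a b - tt r with hq
    have hq1 : 1 ≤ q := by omega
    have hqN : q < nn r := by omega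
    set x := (v + q) % nn r with hx
    have hxN : x < nn r := Nat.mod_lt _ (nn_pos r)
    have hdx : dc r v x = q := dc_vadd r hv hqN
    have hxv : x ≠ v := by
      intro hxy
      rw [hxy, dc_self r hv] at hdx; omega
    have hxu : x ≠ u := by
      intro hxy
      rw [hxy, ← hadef] at hdx; omega
    have hxw : x ≠ w := by
      intro hxy
      rw [hxy, ← hbdef] at hdx; omega
    have hadj1 : ((Hg r).delete v).twoSection.Adj u x := by
      rw [adj_del_iff r hv hu hxN huv hxv (Ne.symm hxu), hdx, ← hadef]
      omega
    have hadj2 : ((Hg r).delete v).twoSection.Adj x w := by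
      rw [adj_del_iff r hv hxN hw hxv hwv hxw, hdx, ← hbdef]
      omega
    have hle : ((Hg r).delete v).twoSection.dist u w ≤ 2 := by
      have h := SimpleGraph.dist_le
        (SimpleGraph.Walk.cons hadj1 (SimpleGraph.Walk.cons hadj2 SimpleGraph.Walk.nil))
      simpa using h
    have hpos : 0 < ((Hg r).delete v).twoSection.dist u w :=
      (hadj1.reachable.trans hadj2.reachable).pos_dist_of_ne hne
    have hne1 : ((Hg r).delete v).twoSection.dist u w ≠ 1 := by
      rw [Ne, SimpleGraph.dist_eq_one_iff_adj, adj_del_iff r hv hu hw huv hwv hne]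
      omega
    omega

def dval (r v : ℕ) : Sym2 ℕ → ℕ :=
  Sym2.lift ⟨fun u w => if dc r v u ≤ dc r v w + tt r ∧ dc r v w ≤ dc r v u + tt r then 1 else 2,
    fun a b => by simp only; rw [if_congr and_comm rfl rfl]⟩

lemma wiener_Hg (r : ℕ) :
    (Hg r).wiener = ((Finset.range (nn r)).sym2.filter (fun p => ¬ p.IsDiag)).card := by
  unfold Hypergraph'.wiener
  rw [Hg_verts, Finset.card_eq_sum_ones]
  apply Finset.sum_congr rfl
  intro p hp
  induction p using Sym2.ind with
  | _ u w =>
    simp only [Finset.mem_filter, Finset.mk_mem_sym2_iff, Sym2.mk_isDiag_iff,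
      Finset.mem_range] at hp
    obtain ⟨⟨hu, hw⟩, hdiag⟩ := hp
    rw [Sym2.lift_mk]
    exact SimpleGraph.dist_eq_one_iff_adj.mpr (adj_all r hu hw hdiag)

lemma wiener_del (r v : ℕ) (hv : v < nn r) :
    ((Hg r).delete v).wiener =
      (((Finset.range (nn r)).erase v).sym2.filter (fun p => ¬ p.IsDiag)).card
      + ((((Finset.range (nn r)).erase v).sym2.filter (fun p => ¬ p.IsDiag)).filter
          (fun p => dval r v p = 2)).card := by
  set S' := ((Finset.range (nn r)).erase v).sym2.filter (fun p => ¬ p.IsDiag) with hS'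
  have hverts : ((Hg r).delete v).verts = (Finset.range (nn r)).erase v := by
    show (Hg r).verts.erase v = _
    rw [Hg_verts]
  unfold Hypergraph'.wiener
  rw [hverts, ← hS']
  have step1 : ∀ p ∈ S',
      Sym2.lift ⟨fun u w => ((Hg r).delete v).dist u w, fun _ _ => SimpleGraph.dist_comm⟩ p
        = dval r v p := by
    intro p hp
    induction p using Sym2.ind with
    | _ u w =>
      simp only [hS', Finset.mem_filter, Finset.mk_mem_sym2_iff, Sym2.mk_isDiag_iff,
        Finset.mem_erase, Finset.mem_range] at hp
      obtain ⟨⟨⟨huv, hu⟩, hwv, hw⟩, hdiag⟩ := hp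
      rw [Sym2.lift_mk]
      show ((Hg r).delete v).twoSection.dist u w = _
      rw [dist_del r hv hu hw huv hwv hdiag]
      simp [dval]
  rw [Finset.sum_congr rfl step1]
  have hval : ∀ p, dval r v p = 1 ∨ dval r v p = 2 := by
    intro p
    induction p using Sym2.ind with
    | _ u w => simp only [dval, Sym2.lift_mk]; split_ifs <;> simp
  have step2 : ∀ p ∈ S', dval r v p = 1 + if dval r v p = 2 then 1 else 0 := by
    intro p _
    rcases hval p with h | h <;> rw [h] <;> simp
  rw [Finset.sum_congr rfl step2, Finset.sum_add_distrib, Finset.sum_const, smul_eq_mul,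
    mul_one]
  congr 1
  exact (Finset.card_filter _ _).symm



lemma S_split (r v : ℕ) (hv : v < nn r) :
    ((Finset.range (nn r)).sym2.filter (fun p => ¬ p.IsDiag)).card
      = (((Finset.range (nn r)).erase v).sym2.filter (fun p => ¬ p.IsDiag)).card
        + (nn r - 1) := by
  set n := nn r with hn
  set S := (Finset.range n).sym2.filter (fun p => ¬ p.IsDiag) with hS
  set S' := ((Finset.range n).erase v).sym2.filter (fun p => ¬ p.IsDiag) with hS'
  set Sv := ((Finset.range n).erase v).image (fun u => s(v,u)) with hSv
  have hunion : S = S' ∪ Sv := by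
    ext p
    induction p using Sym2.ind with
    | _ x y =>
      simp only [hS, hS', hSv, Finset.mem_union, Finset.mem_filter, Finset.mk_mem_sym2_iff,
        Sym2.mk_isDiag_iff, Finset.mem_erase, Finset.mem_range, Finset.mem_image]
      constructor
      · rintro ⟨⟨hx, hy⟩, hne⟩
        by_cases hxv : x = v
        · exact Or.inr ⟨y, ⟨fun h => hne (hxv.trans h.symm), hy⟩, by rw [← hxv]⟩
        · by_cases hyv : y = v
          · exact Or.inr ⟨x, ⟨fun h => hne (h.trans hyv.symm), hx⟩,
              by rw [← hyv, Sym2.eq_swap]⟩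
          · exact Or.inl ⟨⟨⟨hxv, hx⟩, ⟨hyv, hy⟩⟩, hne⟩
      · rintro (⟨⟨⟨_, hx⟩, _, hy⟩, hne⟩ | ⟨u, ⟨huv, hu⟩, heq⟩)
        · exact ⟨⟨hx, hy⟩, hne⟩
        · rw [Sym2.eq_iff] at heq
          rcases heq with ⟨h1, h2⟩ | ⟨h1, h2⟩ <;>
            exact ⟨⟨by omega, by omega⟩, by omega⟩
  have hdisj : Disjoint S' Sv := by
    rw [Finset.disjoint_left]
    intro p hp hp'
    obtain ⟨u, hu, rfl⟩ := Finset.mem_image.mp hp'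
    rw [hS', Finset.mem_filter, Finset.mk_mem_sym2_iff] at hp
    exact (Finset.mem_erase.mp hp.1.1).1 rfl
  have hcardv : Sv.card = n - 1 := by
    rw [hSv, Finset.card_image_of_injOn, Finset.card_erase_of_mem (Finset.mem_range.mpr hv),
      Finset.card_range]
    intro u1 h1 u2 _ heq
    simp only [Finset.coe_erase, Set.mem_diff, Finset.mem_coe, Finset.mem_range,
      Set.mem_singleton_iff] at h1
    rw [Sym2.eq_iff] at heq
    rcases heq with ⟨-, h⟩ | ⟨h1', h2'⟩
    · exact h
    · exact absurd h2' h1.2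
  rw [hunion, Finset.card_union_of_disjoint hdisj, hcardv]

lemma sum_count (r : ℕ) :
    ∑ a ∈ Finset.Ico 1 (nn r), (nn r - (a + tt r + 1)) = nn r - 1 := by
  have hnts : nn r = tt r + ss r := rfl
  have hs : ss r = 2*r+8 := rfl
  have h1 : ∀ a ∈ Finset.Ico 1 (nn r), nn r - (a + tt r + 1) = ss r - (a+1) := by
    intro a _; omega
  rw [Finset.sum_congr rfl h1]
  have hst := ss_le_tt r
  have hsub : Finset.Ico 1 (ss r - 1) ⊆ Finset.Ico 1 (nn r) :=
    Finset.Ico_subset_Ico le_rfl (by omega)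
  rw [← Finset.sum_subset hsub (by
    intro x hx1 hx2
    simp only [Finset.mem_Ico] at hx1 hx2
    omega)]
  rw [Finset.sum_Ico_eq_sum_range]
  have hm : ss r - 1 - 1 = 2*r+6 := by omega
  rw [hm]
  have h2 : ∀ i ∈ Finset.range (2*r+6), ss r - (1 + i + 1) = (2*r+6) - i := by
    intro i _; omega
  rw [Finset.sum_congr rfl h2]
  have h3 : ∀ i ∈ Finset.range (2*r+6), (2*r+6) - i = (2*r+6) - 1 - i + 1 := by
    intro i hi; rw [Finset.mem_range] at hi; omega
  rw [Finset.sum_congr rfl h3, Finset.sum_range_reflect (fun i => i + 1) (2*r+6),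
    Finset.sum_add_distrib, Finset.sum_const, Finset.card_range, smul_eq_mul, mul_one]
  have hgauss : (∑ i ∈ Finset.range (2*r+6), i) = (r+3)*(2*r+5) := by
    have h := Finset.sum_range_id_mul_two (2*r+6)
    have h' : (2*r+6) * (2*r+6-1) = ((r+3)*(2*r+5))*2 := by
      have : 2*r+6-1 = 2*r+5 := by omega
      rw [this]; ring
    rw [h'] at h
    exact Nat.eq_of_mul_eq_mul_right (by omega) h
  rw [hgauss]
  have hkey : (r+3)*(2*r+5) + (2*r+6) + 1 = nn r := by
    rw [hnts]; show _ = (2*r+7)*(r+2) + (2*r+8); ring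
  omega

lemma dval_eq_two_iff (r v x y : ℕ) :
    dval r v s(x,y) = 2 ↔
      ¬ (dc r v x ≤ dc r v y + tt r ∧ dc r v y ≤ dc r v x + tt r) := by
  simp only [dval, Sym2.lift_mk]
  split_ifs with h <;> simp [h]

lemma far_count (r v : ℕ) (hv : v < nn r) :
    ((((Finset.range (nn r)).erase v).sym2.filter (fun p => ¬ p.IsDiag)).filter
        (fun p => dval r v p = 2)).card = nn r - 1 := by
  have ht := tt_ge r
  set n := nn r with hn
  set t := tt r with htt
  set T := (Finset.Ico 1 n).sigma (fun a => Finset.Ico (a + t + 1) n) with hT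
  set g : (_ : ℕ) × ℕ → Sym2 ℕ := fun q => s((v + q.1) % n, (v + q.2) % n) with hg
  have himg : (((Finset.range n).erase v).sym2.filter (fun p => ¬ p.IsDiag)).filter
      (fun p => dval r v p = 2) = T.image g := by
    ext p
    induction p using Sym2.ind with
    | _ x y =>
      simp only [Finset.mem_filter, Finset.mk_mem_sym2_iff, Sym2.mk_isDiag_iff,
        Finset.mem_erase, Finset.mem_range, Finset.mem_image, hT, Finset.mem_sigma,
        Finset.mem_Ico, dval_eq_two_iff]
      constructor
      · rintro ⟨⟨⟨⟨hxv, hx⟩, hyv, hy⟩, hne⟩, hfar⟩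
        have hax : 1 ≤ dc r v x := dc_pos r hv hx hxv
        have hay : 1 ≤ dc r v y := dc_pos r hv hy hyv
        have hbx : dc r v x < n := dc_lt r v x
        have hby : dc r v y < n := dc_lt r v y
        rcases (by omega : dc r v y + t < dc r v x ∨ dc r v x + t < dc r v y) with h | h
        · refine ⟨⟨dc r v y, dc r v x⟩, ⟨⟨hay, hby⟩, by dsimp only; omega, hbx⟩, ?_⟩
          show s((v + dc r v y) % n, (v + dc r v x) % n) = s(x,y)
          rw [vadd_dc r hv hy, vadd_dc r hv hx, Sym2.eq_swap]
        · refine ⟨⟨dc r v x, dc r v y⟩, ⟨⟨hax, hbx⟩, by dsimp only; omega, hby⟩, ?_⟩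
          show s((v + dc r v x) % n, (v + dc r v y) % n) = s(x,y)
          rw [vadd_dc r hv hx, vadd_dc r hv hy]
      · rintro ⟨⟨a, b⟩, hq, heq⟩
        obtain ⟨⟨ha1, haN⟩, hab, hbN⟩ := hq
        dsimp only at ha1 haN hab hbN heq
        have hda : dc r v ((v + a) % n) = a := dc_vadd r hv haN
        have hdb : dc r v ((v + b) % n) = b := dc_vadd r hv hbN
        have hxa : (v + a) % n < n := Nat.mod_lt _ (nn_pos r)
        have hxb : (v + b) % n < n := Nat.mod_lt _ (nn_pos r)
        have hav : (v + a) % n ≠ v := by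
          intro h; rw [h, dc_self r hv] at hda; omega
        have hbv : (v + b) % n ≠ v := by
          intro h; rw [h, dc_self r hv] at hdb; omega
        have hne : (v + a) % n ≠ (v + b) % n := by
          intro h; rw [h, hdb] at hda; omega
        rw [Sym2.eq_iff] at heq
        rcases heq with ⟨h1, h2⟩ | ⟨h1, h2⟩
        · rw [← h1, ← h2]
          exact ⟨⟨⟨⟨hav, hxa⟩, hbv, hxb⟩, hne⟩, by rw [hda, hdb]; omega⟩
        · rw [← h1, ← h2]
          exact ⟨⟨⟨⟨hbv, hxb⟩, hav, hxa⟩, Ne.symm hne⟩, by rw [hda, hdb]; omega⟩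
  have hinj : Set.InjOn g ↑T := by
    rintro ⟨a1, b1⟩ h1 ⟨a2, b2⟩ h2 heq
    rw [Finset.mem_coe] at h1 h2
    simp only [hT, Finset.mem_sigma, Finset.mem_Ico] at h1 h2
    simp only [hg, Sym2.eq_iff] at heq
    have key : ∀ c d : ℕ, c < n → d < n → (v + c) % n = (v + d) % n → c = d := by
      intro c d hc hd h
      have := congrArg (dc r v) h
      rwa [dc_vadd r hv hc, dc_vadd r hv hd] at this
    rcases heq with ⟨e1, e2⟩ | ⟨e1, e2⟩
    · obtain rfl := key a1 a2 (by omega) (by omega) e1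
      obtain rfl := key b1 b2 (by omega) (by omega) e2
      rfl
    · have := key a1 b2 (by omega) (by omega) e1
      have := key b1 a2 (by omega) (by omega) e2
      omega
  rw [himg, Finset.card_image_of_injOn hinj, Finset.card_sigma]
  have : ∀ a ∈ Finset.Ico 1 n, (Finset.Ico (a + t + 1) n).card = n - (a + t + 1) := by
    intro a _; rw [Nat.card_Ico]
  rw [Finset.sum_congr rfl this]
  exact sum_count r

lemma soltes_Hg (r : ℕ) : (Hg r).IsSoltes ∧ ∀ e ∈ (Hg r).edges, e.card = kk r := by
  have ht := tt_ge r
  have hn8 := nn_ge r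
  constructor
  · refine ⟨?_, ?_, ?_⟩
    · rw [Hg_verts, Finset.card_range]; omega
    · intro u hu w hw
      rw [Hg_verts, Finset.mem_range] at hu hw
      rcases eq_or_ne u w with rfl | hne
      · exact SimpleGraph.Reachable.refl u
      · exact (adj_all r hu hw hne).reachable
    · intro v hv
      rw [Hg_verts, Finset.mem_range] at hv
      constructor
      · -- connectivity of the deletion
        intro u hu w hw
        have hverts : ((Hg r).delete v).verts = (Finset.range (nn r)).erase v := by
          show (Hg r).verts.erase v = _
          rw [Hg_verts]
        rw [hverts, Finset.mem_erase, Finset.mem_range] at hu hw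
        rcases eq_or_ne u w with rfl | hne
        · exact SimpleGraph.Reachable.refl u
        · apply SimpleGraph.Reachable.of_dist_ne_zero
          rw [dist_del r hv hu.2 hw.2 hu.1 hw.1 hne]
          split_ifs <;> omega
      · -- Wiener index preservation
        rw [wiener_del r v hv, far_count r v hv, wiener_Hg r, S_split r v hv]
  · intro e he
    obtain ⟨i, _, rfl⟩ := mem_edges_iff.mp he
    exact arc_card r i

end SoltesC

theorem stmt7 :
    {k : ℕ | 2 ≤ k ∧ ∃ H : Hypergraph' ℕ, H.IsSoltes ∧
      ∀ e ∈ H.edges, e.card = k}.Infinite := by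
  apply Set.infinite_of_injective_forall_mem (f := fun r => SoltesC.kk r)
  · have hmono : StrictMono (fun r => SoltesC.kk r) := by
      apply strictMono_nat_of_lt_succ
      intro r
      unfold SoltesC.kk SoltesC.tt
      nlinarith
    exact hmono.injective
  · intro r
    have ht := SoltesC.tt_ge r
    refine ⟨by unfold SoltesC.kk; omega, SoltesC.Hg r, (SoltesC.soltes_Hg r).1,
      (SoltesC.soltes_Hg r).2⟩
end

section
/- Let n ≥ 13 and let H be a 4-uniform hypergraph on n vertices such that every pair of distinct vertices is contained in exactly one edge (i.e., H is a Steiner system S(2,4,n)). Then H is a Šoltés hypergraph; moreover H has diameter 1 and W(H \ v) = C(n-1,2) + (n-1) = C(n,2) = W(H) for every vertex v. -/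
variable {α : Type*} {β : Type*}

lemma card_sym2_filter_not_isDiag {α : Type*} [DecidableEq α] (s : Finset α) :
    (s.sym2.filter (fun p => ¬ p.IsDiag)).card = s.card.choose 2 := by
  have hdiag : s.sym2.filter (fun p => p.IsDiag) = s.image (fun a => Sym2.diag a) := by
    ext p
    simp only [Finset.mem_filter, Finset.mem_image]
    constructor
    · rintro ⟨hp, hd⟩
      obtain ⟨a, rfl⟩ := (show p ∈ Set.range Sym2.diag by rw [Sym2.range_diag]; exact hd)
      exact ⟨a, Finset.mem_sym2_iff.mp hp a (by simp [Sym2.diag]), rfl⟩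
    · rintro ⟨a, ha, rfl⟩
      refine ⟨Finset.mem_sym2_iff.mpr fun b hb => ?_, Sym2.diag_isDiag a⟩
      simp only [Sym2.diag, Sym2.mem_iff] at hb
      rcases hb with rfl | rfl <;> exact ha
  have hdiagcard : (s.sym2.filter (fun p => p.IsDiag)).card = s.card := by
    rw [hdiag]
    apply Finset.card_image_of_injective
    intro a b hab
    simpa [Sym2.diag] using hab
  have htot := Finset.card_filter_add_card_filter_not
    (s := s.sym2) (p := fun p => p.IsDiag)
  rw [Finset.card_sym2, hdiagcard] at htot
  have hch : (s.card + 1).choose 2 = s.card + s.card.choose 2 := by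
    rw [Nat.choose_succ_succ' s.card 1, Nat.choose_one_right]
  omega

theorem stmt8 {α : Type*} [DecidableEq α] (n : ℕ) (hn : 13 ≤ n)
    (H : FinHypergraph α) (hcard : H.verts.card = n)
    (h4 : ∀ e ∈ H.edges, e.card = 4)
    (hSteiner : ∀ u ∈ H.verts, ∀ v ∈ H.verts, u ≠ v →
      (H.edges.filter fun e => u ∈ e ∧ v ∈ e).card = 1) :
    H.IsSoltes ∧ H.diam = 1 ∧ H.wiener = n.choose 2 ∧
      ∀ v ∈ H.verts, (H.delete v).wiener = (n - 1).choose 2 + (n - 1) := by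
  classical
  -- existence of an edge through any pair
  have edgeEx : ∀ u ∈ H.verts, ∀ w ∈ H.verts, u ≠ w →
      ∃ e ∈ H.edges, u ∈ e ∧ w ∈ e := by
    intro u hu w hw huw
    have h1 := hSteiner u hu w hw huw
    have hne : (H.edges.filter fun e => u ∈ e ∧ w ∈ e).Nonempty :=
      Finset.card_pos.mp (by omega)
    obtain ⟨e, he⟩ := hne
    rw [Finset.mem_filter] at he
    exact ⟨e, he.1, he.2⟩
  -- uniqueness of the edge through a pair
  have edgeUn : ∀ u ∈ H.verts, ∀ w ∈ H.verts, u ≠ w → ∀ e ∈ H.edges, ∀ e' ∈ H.edges,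
      u ∈ e → w ∈ e → u ∈ e' → w ∈ e' → e = e' := by
    intro u hu w hw huw e he e' he' hue hwe hue' hwe'
    have h1 := hSteiner u hu w hw huw
    have hle : (H.edges.filter fun e => u ∈ e ∧ w ∈ e).card ≤ 1 := h1.le
    exact Finset.card_le_one.mp hle e (Finset.mem_filter.mpr ⟨he, hue, hwe⟩)
      e' (Finset.mem_filter.mpr ⟨he', hue', hwe'⟩)
  have adj : ∀ u ∈ H.verts, ∀ w ∈ H.verts, u ≠ w → H.twoSection.Adj u w := by
    intro u hu w hw huw
    exact ⟨huw, edgeEx u hu w hw huw⟩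
  have dist1 : ∀ u ∈ H.verts, ∀ w ∈ H.verts, u ≠ w → H.dist u w = 1 := by
    intro u hu w hw huw
    exact SimpleGraph.dist_eq_one_iff_adj.mpr (adj u hu w hw huw)
  have hconn : H.Connected := by
    intro u hu w hw
    rcases eq_or_ne u w with rfl | huw
    · exact SimpleGraph.Reachable.refl u
    · exact (adj u hu w hw huw).reachable
  -- Wiener index of H
  have hW : H.wiener = n.choose 2 := by
    unfold FinHypergraph.wiener
    rw [Finset.sum_congr rfl (fun p hp => ?_), Finset.sum_const, smul_eq_mul, mul_one,
      card_sym2_filter_not_isDiag, hcard]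
    rw [Finset.mem_filter] at hp
    obtain ⟨hps, hpd⟩ := hp
    induction p using Sym2.ind with
    | _ a b =>
      rw [Finset.mk_mem_sym2_iff] at hps
      have hab : a ≠ b := by simpa using hpd
      simpa using dist1 a hps.1 b hps.2 hab
  -- diameter
  have hdiam : H.diam = 1 := by
    apply le_antisymm
    · apply Finset.sup_le
      intro p hp
      rw [Finset.mem_offDiag] at hp
      exact le_of_eq (dist1 p.1 hp.1 p.2 hp.2.1 hp.2.2)
    · obtain ⟨u, hu, w, hw, huw⟩ := Finset.one_lt_card.mp (by omega : 1 < H.verts.card)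
      have hmem : (u, w) ∈ H.verts.offDiag := Finset.mem_offDiag.mpr ⟨hu, hw, huw⟩
      calc 1 = H.dist u w := (dist1 u hu w hw huw).symm
        _ ≤ H.diam := Finset.le_sup (f := fun p => H.dist p.1 p.2) hmem
  -- the deleted hypergraph
  have hdel : ∀ v ∈ H.verts, (H.delete v).Connected ∧
      (H.delete v).wiener = (n - 1).choose 2 + (n - 1) := by
    intro v hv
    have hcard' : (H.verts.erase v).card = n - 1 := by
      rw [Finset.card_erase_of_mem hv, hcard]
    -- key distance lemma in H \ v
    have key : ∀ u ∈ H.verts.erase v, ∀ w ∈ H.verts.erase v, u ≠ w →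
        (H.delete v).twoSection.Reachable u w ∧
        ((∃ e ∈ H.edges, v ∈ e ∧ u ∈ e ∧ w ∈ e) → (H.delete v).dist u w = 2) ∧
        (¬(∃ e ∈ H.edges, v ∈ e ∧ u ∈ e ∧ w ∈ e) → (H.delete v).dist u w = 1) := by
      intro u hu w hw huw
      obtain ⟨hune, hu'⟩ := Finset.mem_erase.mp hu
      obtain ⟨hwne, hw'⟩ := Finset.mem_erase.mp hw
      obtain ⟨e, he, hue, hwe⟩ := edgeEx u hu' w hw' huw
      by_cases hve : v ∈ e
      · -- distance is 2
        have hx : ∃ x ∈ H.verts, x ∉ e := by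
          by_contra hc
          push_neg at hc
          have : H.verts ⊆ e := fun x hxm => hc x hxm
          have := Finset.card_le_card this
          rw [hcard, h4 e he] at this
          omega
        obtain ⟨x, hxV, hxe⟩ := hx
        have hxu : x ≠ u := fun h => hxe (h ▸ hue)
        have hxw : x ≠ w := fun h => hxe (h ▸ hwe)
        obtain ⟨e1, he1, hue1, hxe1⟩ := edgeEx u hu' x hxV (Ne.symm hxu)
        obtain ⟨e2, he2, hxe2, hwe2⟩ := edgeEx x hxV w hw' hxw
        have hv1 : v ∉ e1 := by
          intro hv1
          have : e1 = e := edgeUn u hu' v hv hune e1 he1 e he hue1 hv1 hue hve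
          exact hxe (this ▸ hxe1)
        have hv2 : v ∉ e2 := by
          intro hv2
          have : e2 = e := edgeUn w hw' v hv hwne e2 he2 e he hwe2 hv2 hwe hve
          exact hxe (this ▸ hxe2)
        have adj1 : (H.delete v).twoSection.Adj u x :=
          ⟨Ne.symm hxu, e1, Finset.mem_filter.mpr ⟨he1, hv1⟩, hue1, hxe1⟩
        have adj2 : (H.delete v).twoSection.Adj x w :=
          ⟨hxw, e2, Finset.mem_filter.mpr ⟨he2, hv2⟩, hxe2, hwe2⟩
        have hreach : (H.delete v).twoSection.Reachable u w :=
          adj1.reachable.trans adj2.reachable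
        have hle : (H.delete v).twoSection.dist u w ≤ 2 := by
          have := SimpleGraph.dist_le
            (SimpleGraph.Walk.cons adj1 (SimpleGraph.Walk.cons adj2 SimpleGraph.Walk.nil))
          simpa using this
        have hne1 : (H.delete v).twoSection.dist u w ≠ 1 := by
          intro hd
          obtain ⟨-, e', he', hue', hwe'⟩ := SimpleGraph.dist_eq_one_iff_adj.mp hd
          have he'' : e' ∈ H.edges ∧ v ∉ e' := Finset.mem_filter.mp he'
          have : e' = e := edgeUn u hu' w hw' huw e' he''.1 e he hue' hwe' hue hwe
          exact he''.2 (this ▸ hve)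
        have hpos : 0 < (H.delete v).twoSection.dist u w := hreach.pos_dist_of_ne huw
        have hd2 : (H.delete v).dist u w = 2 := by
          show (H.delete v).twoSection.dist u w = 2
          omega
        exact ⟨hreach, fun _ => hd2, fun hno => absurd ⟨e, he, hve, hue, hwe⟩ hno⟩
      · -- distance is 1
        have adj1 : (H.delete v).twoSection.Adj u w :=
          ⟨huw, e, Finset.mem_filter.mpr ⟨he, hve⟩, hue, hwe⟩
        have hd1 : (H.delete v).dist u w = 1 := SimpleGraph.dist_eq_one_iff_adj.mpr adj1
        refine ⟨adj1.reachable, ?_, fun _ => hd1⟩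
        rintro ⟨e', he', hve', hue', hwe'⟩
        have : e' = e := edgeUn u hu' w hw' huw e' he' e he hue' hwe' hue hwe
        exact absurd (this ▸ hve') hve
    have hconn' : (H.delete v).Connected := by
      intro u hu w hw
      rcases eq_or_ne u w with rfl | huw
      · exact SimpleGraph.Reachable.refl u
      · exact (key u hu w hw huw).1
    refine ⟨hconn', ?_⟩
    -- Wiener index of H \ v
    have hterm : ∀ p ∈ (H.verts.erase v).sym2.filter (fun p => ¬ p.IsDiag),
        Sym2.lift ⟨fun u w => (H.delete v).dist u w, fun _ _ => SimpleGraph.dist_comm⟩ p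
          = if (∃ e ∈ H.edges, v ∈ e ∧ p ∈ e.sym2) then 2 else 1 := by
      intro p hp
      rw [Finset.mem_filter] at hp
      obtain ⟨hps, hpd⟩ := hp
      induction p using Sym2.ind with
      | _ a b =>
        rw [Finset.mk_mem_sym2_iff] at hps
        have hab : a ≠ b := by simpa using hpd
        obtain ⟨hk1, hk2, hk3⟩ := key a hps.1 b hps.2 hab
        by_cases hqp : (∃ e ∈ H.edges, v ∈ e ∧ s(a, b) ∈ e.sym2)
        · rw [if_pos hqp]
          obtain ⟨e, he, hve, hpe⟩ := hqp
          rw [Finset.mk_mem_sym2_iff] at hpe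
          simpa using hk2 ⟨e, he, hve, hpe.1, hpe.2⟩
        · rw [if_neg hqp]
          have hd1 : (H.delete v).dist a b = 1 := hk3 (by
            rintro ⟨e, he, hve, hae, hbe⟩
            exact hqp ⟨e, he, hve, Finset.mk_mem_sym2_iff.mpr ⟨hae, hbe⟩⟩)
          simpa using hd1
    -- the set of distance-2 pairs
    have hDset : ((H.verts.erase v).sym2.filter (fun p => ¬ p.IsDiag)).filter (fun p => ∃ e ∈ H.edges, v ∈ e ∧ p ∈ e.sym2) =
        (H.edges.filter (fun e => v ∈ e)).biUnion
          (fun e => (e.erase v).sym2.filter (fun p => ¬ p.IsDiag)) := by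
      ext p
      simp only [Finset.mem_filter, Finset.mem_biUnion]
      constructor
      · rintro ⟨⟨hps, hpd⟩, e, he, hve, hpe⟩
        refine ⟨e, ⟨he, hve⟩, ?_, hpd⟩
        rw [Finset.mem_sym2_iff] at hps hpe ⊢
        intro a ha
        exact Finset.mem_erase.mpr
          ⟨Finset.ne_of_mem_erase (hps a ha), hpe a ha⟩
      · rintro ⟨e, hef, hpe, hpd⟩
        refine ⟨⟨?_, hpd⟩, e, hef.1, hef.2, ?_⟩
        · rw [Finset.mem_sym2_iff] at hpe ⊢
          intro a ha
          have := Finset.mem_erase.mp (hpe a ha)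
          exact Finset.mem_erase.mpr ⟨this.1, H.edge_sub e hef.1 this.2⟩
        · exact Finset.sym2_mono (Finset.erase_subset v e) hpe
    -- disjointness of the pieces
    have hdisj2 : ∀ e1 ∈ H.edges.filter (fun e => v ∈ e), ∀ e2 ∈ H.edges.filter (fun e => v ∈ e),
        e1 ≠ e2 → Disjoint ((e1.erase v).sym2.filter (fun p => ¬ p.IsDiag))
          ((e2.erase v).sym2.filter (fun p => ¬ p.IsDiag)) := by
      intro e1 he1 e2 he2 hne
      rw [Finset.mem_filter] at he1 he2
      rw [Finset.disjoint_left]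
      intro p hp1 hp2
      rw [Finset.mem_filter] at hp1 hp2
      apply hne
      induction p using Sym2.ind with
      | _ a b =>
        have h1 := Finset.mk_mem_sym2_iff.mp hp1.1
        have h2 := Finset.mk_mem_sym2_iff.mp hp2.1
        have ha1 := Finset.mem_erase.mp h1.1
        have ha2 := Finset.mem_erase.mp h2.1
        have haV : a ∈ H.verts := H.edge_sub e1 he1.1 ha1.2
        exact edgeUn a haV v hv ha1.1 e1 he1.1 e2 he2.1 ha1.2 he1.2 ha2.2 he2.2
    have hdisj1 : ∀ e1 ∈ H.edges.filter (fun e => v ∈ e), ∀ e2 ∈ H.edges.filter (fun e => v ∈ e),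
        e1 ≠ e2 → Disjoint (e1.erase v) (e2.erase v) := by
      intro e1 he1 e2 he2 hne
      rw [Finset.mem_filter] at he1 he2
      rw [Finset.disjoint_left]
      intro a ha1 ha2
      have h1 := Finset.mem_erase.mp ha1
      have h2 := Finset.mem_erase.mp ha2
      have haV : a ∈ H.verts := H.edge_sub e1 he1.1 h1.2
      exact hne (edgeUn a haV v hv h1.1 e1 he1.1 e2 he2.1 h1.2 he1.2 h2.2 he2.2)
    -- vertex partition: n - 1 = 3 * degree
    have hpart : H.verts.erase v =
        (H.edges.filter (fun e => v ∈ e)).biUnion (fun e => e.erase v) := by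
      ext u
      simp only [Finset.mem_biUnion, Finset.mem_filter, Finset.mem_erase]
      constructor
      · rintro ⟨hune, huV⟩
        obtain ⟨e, he, hue, hve⟩ := edgeEx u huV v hv hune
        exact ⟨e, ⟨he, hve⟩, hune, hue⟩
      · rintro ⟨e, ⟨he, hve⟩, hune, hue⟩
        exact ⟨hune, H.edge_sub e he hue⟩
    have hdeg : n - 1 = 3 * (H.edges.filter (fun e => v ∈ e)).card := by
      have := Finset.card_biUnion hdisj1
      rw [← hpart, hcard'] at this
      rw [this]
      rw [Finset.sum_congr rfl (fun e he => ?_), Finset.sum_const, smul_eq_mul, Nat.mul_comm]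
      rw [Finset.mem_filter] at he
      rw [Finset.card_erase_of_mem he.2, h4 e he.1]
    have hDcard : (((H.verts.erase v).sym2.filter (fun p => ¬ p.IsDiag)).filter (fun p => ∃ e ∈ H.edges, v ∈ e ∧ p ∈ e.sym2)).card
        = n - 1 := by
      rw [hDset, Finset.card_biUnion hdisj2]
      rw [Finset.sum_congr rfl (fun e he => ?_), Finset.sum_const, smul_eq_mul, Nat.mul_comm,
        ← hdeg]
      rw [Finset.mem_filter] at he
      rw [card_sym2_filter_not_isDiag, Finset.card_erase_of_mem he.2, h4 e he.1]
      rfl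
    -- put it together
    unfold FinHypergraph.wiener
    have hverts : (H.delete v).verts = H.verts.erase v := rfl
    rw [hverts]
    rw [Finset.sum_congr rfl hterm, Finset.sum_ite, Finset.sum_const, Finset.sum_const,
      smul_eq_mul, smul_eq_mul, mul_one]
    have hfneg := Finset.card_filter_add_card_filter_not
      (s := (H.verts.erase v).sym2.filter (fun p => ¬ p.IsDiag)) (p := fun p => ∃ e ∈ H.edges, v ∈ e ∧ p ∈ e.sym2)
    rw [hDcard] at hfneg
    rw [card_sym2_filter_not_isDiag, hcard'] at hfneg
    rw [hDcard]
    omega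
  have hWeq : (n - 1).choose 2 + (n - 1) = n.choose 2 := by
    have h2 := Nat.choose_succ_succ' (n - 1) 1
    rw [Nat.choose_one_right] at h2
    norm_num at h2
    have h1 : n - 1 + 1 = n := by omega
    rw [h1] at h2
    omega
  refine ⟨⟨by omega, hconn, fun v hv => ⟨(hdel v hv).1, by rw [(hdel v hv).2, hW, hWeq]⟩⟩,
    hdiam, hW, fun v hv => (hdel v hv).2⟩
end

section
/- The 6-uniform hypergraph H on vertex set {0,1,...,11} with edge set {{0,1,2,3,4,5}, {0,1,6,7,8,9}, {2,3,6,7,10,11}, {4,5,8,9,10,11}, {0,2,4,6,8,10}, {1,3,5,7,9,11}} is a Šoltés hypergraph of diameter 2. -/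
variable {α : Type*} {β : Type*}

/-- A hypergraph: a finite vertex set together with a set of edges,
each an at-least-2-element subset of the vertex set. -/
structure HypergraphS (α : Type*) where
  verts : Finset α
  edges : Finset (Finset α)
  edge_sub : ∀ e ∈ edges, e ⊆ verts
  edge_card : ∀ e ∈ edges, 2 ≤ e.card

namespace HypergraphS

/-- The 2-section graph of a hypergraph: two distinct vertices are adjacent
iff some edge contains both. -/
def twoSection (H : HypergraphS α) : SimpleGraph α where
  Adj u v := u ≠ v ∧ ∃ e ∈ H.edges, u ∈ e ∧ v ∈ e
  symm := by
    constructor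
    rintro u v ⟨huv, e, he, hu, hv⟩
    exact ⟨huv.symm, e, he, hv, hu⟩
  loopless := by
    constructor
    rintro u ⟨h, -⟩
    exact h rfl

/-- Distance between two vertices: graph distance in the 2-section. -/
noncomputable def dist (H : HypergraphS α) (u v : α) : ℕ :=
  H.twoSection.dist u v

/-- A hypergraph is connected if every two of its vertices are joined by a path. -/
def Connected (H : HypergraphS α) : Prop :=
  ∀ u ∈ H.verts, ∀ v ∈ H.verts, H.twoSection.Reachable u v

/-- The Wiener index (total distance): the sum of distances over all
unordered pairs of distinct vertices. -/
noncomputable def wiener [DecidableEq α] (H : HypergraphS α) : ℕ :=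
  ∑ p ∈ H.verts.sym2.filter (fun p => ¬ p.IsDiag),
    Sym2.lift ⟨fun u v => H.dist u v, fun _ _ => SimpleGraph.dist_comm⟩ p

/-- Vertex deletion: remove the vertex and all edges containing it. -/
def delete [DecidableEq α] (H : HypergraphS α) (v : α) : HypergraphS α where
  verts := H.verts.erase v
  edges := H.edges.filter fun e => v ∉ e
  edge_sub := by
    intro e he x hx
    rw [Finset.mem_filter] at he
    exact Finset.mem_erase.mpr ⟨fun h => he.2 (h ▸ hx), H.edge_sub e he.1 hx⟩
  edge_card := fun e he => H.edge_card e (Finset.mem_filter.mp he).1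

/-- A Šoltés hypergraph: a connected hypergraph on at least 2 vertices such that
deleting any vertex leaves a connected hypergraph with the same Wiener index. -/
def IsSoltes [DecidableEq α] (H : HypergraphS α) : Prop :=
  2 ≤ H.verts.card ∧ H.Connected ∧
    ∀ v ∈ H.verts, (H.delete v).Connected ∧ (H.delete v).wiener = H.wiener

/-- The diameter: the maximum distance over unordered pairs of distinct vertices. -/
noncomputable def diam [DecidableEq α] (H : HypergraphS α) : ℕ :=
  H.verts.offDiag.sup fun p => H.dist p.1 p.2

/-- The degree of a vertex: the number of edges containing it. -/
def degree [DecidableEq α] (H : HypergraphS α) (v : α) : ℕ :=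
  (H.edges.filter fun e => v ∈ e).card

/-- HypergraphS isomorphism: a bijection between the vertex sets mapping
edges onto edges. -/
def IsIsoTo [DecidableEq β] (H : HypergraphS α) (H' : HypergraphS β) : Prop :=
  ∃ f : α → β, Set.InjOn f ↑H.verts ∧ H'.verts = H.verts.image f ∧
    H'.edges = H.edges.image fun e => e.image f


instance instAdjDec [DecidableEq α] (H : HypergraphS α) : DecidableRel H.twoSection.Adj :=
  fun u v => decidable_of_iff (u ≠ v ∧ ∃ e ∈ H.edges, u ∈ e ∧ v ∈ e) Iff.rfl

/-- If every pair of distinct vertices is adjacent or has a common neighbor,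
the distance is 1 or 2. -/
lemma dist_eq_ite {G : SimpleGraph α} [DecidableRel G.Adj] {u v : α} (h : u ≠ v)
    (hc : G.Adj u v ∨ ∃ w, G.Adj u w ∧ G.Adj w v) :
    G.dist u v = if G.Adj u v then 1 else 2 := by
  split_ifs with ha
  · exact SimpleGraph.dist_eq_one_iff_adj.mpr ha
  · obtain ⟨w, h1, h2⟩ := hc.resolve_left ha
    have hr : G.Reachable u v := ⟨SimpleGraph.Walk.cons h1 h2.toWalk⟩
    have hle : G.dist u v ≤ 2 := by
      simpa using SimpleGraph.dist_le (SimpleGraph.Walk.cons h1 h2.toWalk)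
    have hpos : 0 < G.dist u v := hr.pos_dist_of_ne h
    have hne1 : G.dist u v ≠ 1 := fun hh =>
      ha (SimpleGraph.dist_eq_one_iff_adj.mp hh)
    omega

/-- good hypergraph: all distinct vertex pairs adjacent or with common neighbor. -/
def Good [DecidableEq α] (H : HypergraphS α) : Prop :=
  ∀ u ∈ H.verts, ∀ v ∈ H.verts, u ≠ v →
    H.twoSection.Adj u v ∨ ∃ w ∈ H.verts, H.twoSection.Adj u w ∧ H.twoSection.Adj w v

instance [DecidableEq α] (H : HypergraphS α) : Decidable (Good H) := by
  unfold Good; infer_instance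

lemma Good.connected [DecidableEq α] {H : HypergraphS α} (hg : Good H) : H.Connected := by
  intro u hu v hv
  rcases eq_or_ne u v with rfl | hne
  · exact SimpleGraph.Reachable.refl u
  rcases hg u hu v hv hne with h | ⟨w, _, h1, h2⟩
  · exact h.reachable
  · exact ⟨SimpleGraph.Walk.cons h1 h2.toWalk⟩

lemma Good.dist_eq [DecidableEq α] {H : HypergraphS α} (hg : Good H) {u v : α}
    (hu : u ∈ H.verts) (hv : v ∈ H.verts) (hne : u ≠ v) :
    H.dist u v = if H.twoSection.Adj u v then 1 else 2 := by
  refine dist_eq_ite hne ?_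
  rcases hg u hu v hv hne with h | ⟨w, _, h1, h2⟩
  · exact Or.inl h
  · exact Or.inr ⟨w, h1, h2⟩

/-- A computable version of the Wiener index, valid for `Good` hypergraphs. -/
def wienerC [DecidableEq α] (H : HypergraphS α) : ℕ :=
  ∑ p ∈ H.verts.sym2.filter (fun p => ¬ p.IsDiag),
    Sym2.lift ⟨fun u v => if H.twoSection.Adj u v then 1 else 2,
      fun _ _ => if_congr (SimpleGraph.adj_comm _ _ _) rfl rfl⟩ p

lemma Good.wiener_eq [DecidableEq α] {H : HypergraphS α} (hg : Good H) :
    H.wiener = H.wienerC := by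
  refine Finset.sum_congr rfl ?_
  intro p hp
  rw [Finset.mem_filter] at hp
  induction p with
  | _ u v =>
    rw [Finset.mk_mem_sym2_iff] at hp
    have hne : u ≠ v := by simpa using hp.2
    simp only [Sym2.lift_mk]
    exact hg.dist_eq hp.1.1 hp.1.2 hne

lemma Good.diam_eq [DecidableEq α] {H : HypergraphS α} (hg : Good H)
    (h2 : ∃ u ∈ H.verts, ∃ v ∈ H.verts, u ≠ v ∧ ¬ H.twoSection.Adj u v) :
    H.diam = 2 := by
  unfold diam
  obtain ⟨u, hu, v, hv, hne, hna⟩ := h2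
  apply le_antisymm
  · apply Finset.sup_le
    intro p hp
    rw [Finset.mem_offDiag] at hp
    rw [hg.dist_eq hp.1 hp.2.1 hp.2.2]
    split_ifs <;> omega
  · have : H.dist u v = 2 := by rw [hg.dist_eq hu hv hne, if_neg hna]
    calc 2 = H.dist u v := this.symm
    _ ≤ _ := Finset.le_sup (f := fun p => H.dist p.1 p.2) (b := (u, v))
        (Finset.mem_offDiag.mpr ⟨hu, hv, hne⟩)


end HypergraphS

def sixUniformTwelve : HypergraphS (Fin 12) where
  verts := Finset.univ
  edges := {{0, 1, 2, 3, 4, 5}, {0, 1, 6, 7, 8, 9}, {2, 3, 6, 7, 10, 11},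
            {4, 5, 8, 9, 10, 11}, {0, 2, 4, 6, 8, 10}, {1, 3, 5, 7, 9, 11}}
  edge_sub := fun e _ => e.subset_univ
  edge_card := by
    intro e he
    fin_cases he <;> decide


theorem stmt12 : sixUniformTwelve.IsSoltes ∧ sixUniformTwelve.diam = 2 := by
  have hg : HypergraphS.Good sixUniformTwelve := by decide
  have hgd : ∀ v : Fin 12, HypergraphS.Good (sixUniformTwelve.delete v) := by decide
  have hw : sixUniformTwelve.wienerC = 72 := by decide
  have hwd : ∀ v : Fin 12, (sixUniformTwelve.delete v).wienerC = 72 := by decide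
  refine ⟨⟨by decide, hg.connected, ?_⟩, ?_⟩
  · intro v _
    refine ⟨(hgd v).connected, ?_⟩
    rw [(hgd v).wiener_eq, hwd v, hg.wiener_eq, hw]
  · refine hg.diam_eq ⟨0, by decide, 11, by decide, by decide, by decide⟩
end

section
/- There is no Šoltés hypergraph with at most 4 edges. -/
variable {α : Type*} {β : Type*}

/-- A hypergraph: a finite vertex set together with a set of edges,
each an at-least-2-element subset of the vertex set. -/
structure SHypergraph (α : Type*) where
  verts : Finset α
  edges : Finset (Finset α)
  edge_sub : ∀ e ∈ edges, e ⊆ verts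
  edge_card : ∀ e ∈ edges, 2 ≤ e.card

namespace SHypergraph

/-- The 2-section graph of a hypergraph: two distinct vertices are adjacent
iff some edge contains both. -/
def twoSection (H : SHypergraph α) : SimpleGraph α where
  Adj u v := u ≠ v ∧ ∃ e ∈ H.edges, u ∈ e ∧ v ∈ e
  symm := ⟨by
    rintro u v ⟨huv, e, he, hu, hv⟩
    exact ⟨huv.symm, e, he, hv, hu⟩⟩
  loopless := ⟨by
    rintro u ⟨h, -⟩
    exact h rfl⟩

/-- Distance between two vertices: graph distance in the 2-section. -/
noncomputable def dist (H : SHypergraph α) (u v : α) : ℕ :=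
  H.twoSection.dist u v

/-- A hypergraph is connected if every two of its vertices are joined by a path. -/
def Connected (H : SHypergraph α) : Prop :=
  ∀ u ∈ H.verts, ∀ v ∈ H.verts, H.twoSection.Reachable u v

/-- The Wiener index (total distance): the sum of distances over all
unordered pairs of distinct vertices. -/
noncomputable def wiener [DecidableEq α] (H : SHypergraph α) : ℕ :=
  ∑ p ∈ H.verts.sym2.filter (fun p => ¬ p.IsDiag),
    Sym2.lift ⟨fun u v => H.dist u v, fun _ _ => SimpleGraph.dist_comm⟩ p

/-- Vertex deletion: remove the vertex and all edges containing it. -/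
def delete [DecidableEq α] (H : SHypergraph α) (v : α) : SHypergraph α where
  verts := H.verts.erase v
  edges := H.edges.filter fun e => v ∉ e
  edge_sub := by
    intro e he x hx
    rw [Finset.mem_filter] at he
    exact Finset.mem_erase.mpr ⟨fun h => he.2 (h ▸ hx), H.edge_sub e he.1 hx⟩
  edge_card := fun e he => H.edge_card e (Finset.mem_filter.mp he).1

/-- A Šoltés hypergraph: a connected hypergraph on at least 2 vertices such that
deleting any vertex leaves a connected hypergraph with the same Wiener index. -/
def IsSoltes [DecidableEq α] (H : SHypergraph α) : Prop :=
  2 ≤ H.verts.card ∧ H.Connected ∧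
    ∀ v ∈ H.verts, (H.delete v).Connected ∧ (H.delete v).wiener = H.wiener

/-- The diameter: the maximum distance over unordered pairs of distinct vertices. -/
noncomputable def diam [DecidableEq α] (H : SHypergraph α) : ℕ :=
  H.verts.offDiag.sup fun p => H.dist p.1 p.2

/-- The degree of a vertex: the number of edges containing it. -/
def degree [DecidableEq α] (H : SHypergraph α) (v : α) : ℕ :=
  (H.edges.filter fun e => v ∈ e).card

/-- SHypergraph isomorphism: a bijection between the vertex sets mapping
edges onto edges. -/
def IsIsoTo [DecidableEq β] (H : SHypergraph α) (H' : SHypergraph β) : Prop :=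
  ∃ f : α → β, Set.InjOn f ↑H.verts ∧ H'.verts = H.verts.image f ∧
    H'.edges = H.edges.image fun e => e.image f

end SHypergraph

set_option linter.unusedSectionVars false
set_option linter.unusedVariables false
set_option maxHeartbeats 8000000


namespace SHypergraph

variable {α : Type*} [DecidableEq α] {H : SHypergraph α}

lemma adj_iff {u w : α} :
    H.twoSection.Adj u w ↔ u ≠ w ∧ ∃ e ∈ H.edges, u ∈ e ∧ w ∈ e := Iff.rfl

@[simp] lemma delete_verts (v : α) : (H.delete v).verts = H.verts.erase v := rfl

@[simp] lemma delete_edges (v : α) :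
    (H.delete v).edges = H.edges.filter (fun e => v ∉ e) := rfl

/-- If every edge meeting `c` is inside `c`, reachability stays inside `c`. -/
lemma reach_sub {c : Finset α}
    (hc : ∀ e ∈ H.edges, ∀ x ∈ e, x ∈ c → e ⊆ c) {u w : α}
    (h : H.twoSection.Reachable u w) : u ∈ c → w ∈ c := by
  obtain ⟨p⟩ := h
  induction p with
  | nil => exact id
  | cons h p ih =>
    intro hu
    obtain ⟨-, e, he, hx, hy⟩ := h
    exact ih (hc e he _ hx hu hy)

lemma exists_edge_of_reachable_ne {u w : α}
    (h : H.twoSection.Reachable u w) (hne : u ≠ w) : ∃ e ∈ H.edges, u ∈ e := by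
  obtain ⟨p⟩ := h
  cases p with
  | nil => exact absurd rfl hne
  | cons h p =>
    obtain ⟨-, e, he, hx, -⟩ := h
    exact ⟨e, he, hx⟩

lemma dist_two {V : Type*} {G : SimpleGraph V} {u w m : V} (hne : u ≠ w)
    (hna : ¬ G.Adj u w) (h1 : G.Adj u m) (h2 : G.Adj m w) : G.dist u w = 2 := by
  have hle : G.dist u w ≤ 2 := by
    simpa using SimpleGraph.dist_le (SimpleGraph.Walk.cons h1 (SimpleGraph.Walk.cons h2 SimpleGraph.Walk.nil))
  have h0 : G.dist u w ≠ 0 := by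
    simp only [ne_eq, SimpleGraph.dist_eq_zero_iff_eq_or_not_reachable]
    push_neg
    exact ⟨hne, ⟨SimpleGraph.Walk.cons h1 (SimpleGraph.Walk.cons h2 SimpleGraph.Walk.nil)⟩⟩
  have h1' : G.dist u w ≠ 1 := fun h => hna (SimpleGraph.dist_eq_one_iff_adj.mp h)
  omega

lemma adj_dist_one {V : Type*} {G : SimpleGraph V} {u w : V} (h : G.Adj u w) :
    G.dist u w = 1 := SimpleGraph.dist_eq_one_iff_adj.mpr h

/-- The nondiagonal part of `sym2` of an `insert`. -/
lemma nd_filter_insert (a : α) (t : Finset α) (ha : a ∉ t) :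
    ((insert a t).sym2.filter (fun p => ¬ p.IsDiag)) =
      (t.image (fun b => s(a,b))) ∪ t.sym2.filter (fun p => ¬ p.IsDiag) := by
  ext p
  induction p with
  | _ x y =>
    simp only [Finset.mem_filter, Finset.mk_mem_sym2_iff, Finset.mem_insert,
      Finset.mem_union, Finset.mem_image, Sym2.isDiag_iff_proj_eq]
    constructor
    · rintro ⟨⟨hx, hy⟩, hne⟩
      rcases hx with rfl | hx
      · rcases hy with rfl | hy
        · exact absurd rfl hne
        · exact Or.inl ⟨y, hy, rfl⟩
      · rcases hy with rfl | hy
        · exact Or.inl ⟨x, hx, Sym2.eq_swap⟩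
        · exact Or.inr ⟨⟨hx, hy⟩, hne⟩
    · rintro (⟨b, hb, hbeq⟩ | ⟨⟨hx, hy⟩, hne⟩)
      · rw [Sym2.eq_iff] at hbeq
        rcases hbeq with ⟨rfl, rfl⟩ | ⟨rfl, rfl⟩
        · exact ⟨⟨Or.inl rfl, Or.inr hb⟩, fun h => ha (h ▸ hb)⟩
        · exact ⟨⟨Or.inr hb, Or.inl rfl⟩, fun h => ha (h ▸ hb)⟩
      · exact ⟨⟨Or.inr hx, Or.inr hy⟩, hne⟩

lemma sum_nd_insert (f : Sym2 α → ℕ) {a : α} {t : Finset α} (ha : a ∉ t) :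
    ∑ p ∈ (insert a t).sym2.filter (fun p => ¬ p.IsDiag), f p
      = (∑ b ∈ t, f s(a,b)) + ∑ p ∈ t.sym2.filter (fun p => ¬ p.IsDiag), f p := by
  rw [nd_filter_insert a t ha, Finset.sum_union, Finset.sum_image]
  · intro x _ y _ h
    exact Sym2.congr_right.mp h
  · rw [Finset.disjoint_left]
    rintro p hp hq
    obtain ⟨b, hb, rfl⟩ := Finset.mem_image.mp hp
    have := Finset.mem_filter.mp hq
    have hmem : ∀ x ∈ (s(a,b) : Sym2 α), x ∈ t := Finset.mem_sym2_iff.mp this.1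
    exact ha (hmem a (Sym2.mem_mk_left a b))

lemma sum_nd_singleton (f : Sym2 α → ℕ) (a : α) :
    ∑ p ∈ ({a} : Finset α).sym2.filter (fun p => ¬ p.IsDiag), f p = 0 := by
  rw [Finset.sym2_singleton]
  simp

end SHypergraph

section Stage2
namespace SHypergraph
variable {α : Type*} [DecidableEq α] {H : SHypergraph α}

lemma erase_sym2_filter (s : Finset α) (v : α) :
    ((s.erase v).sym2.filter (fun p => ¬ p.IsDiag)) =
      (s.sym2.filter (fun p => ¬ p.IsDiag)).filter (fun p => v ∉ p) := by
  ext p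
  induction p with
  | _ x y =>
    simp only [Finset.mem_filter, Finset.mk_mem_sym2_iff, Finset.mem_erase,
      Sym2.isDiag_iff_proj_eq, Sym2.mem_iff]
    tauto

lemma wiener_delete_lt (hS : H.IsSoltes) {v : α} (hv : v ∈ H.verts)
    (hd : ∀ u ∈ H.verts, ∀ w ∈ H.verts, u ≠ v → w ≠ v →
      (H.delete v).dist u w = H.dist u w) :
    (H.delete v).wiener < H.wiener := by
  classical
  set f : Sym2 α → ℕ :=
    Sym2.lift ⟨fun u w => H.dist u w, fun _ _ => SimpleGraph.dist_comm⟩ with hf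
  obtain ⟨u, hu, hune⟩ := Finset.exists_mem_ne (lt_of_lt_of_le one_lt_two hS.1) v
  have key : (H.delete v).wiener
      = ∑ p ∈ (H.verts.sym2.filter (fun p => ¬ p.IsDiag)).filter (fun p => v ∉ p), f p := by
    rw [wiener, delete_verts, erase_sym2_filter]
    refine Finset.sum_congr rfl fun p hp => ?_
    induction p with
    | _ x y =>
      simp only [Finset.mem_filter, Finset.mk_mem_sym2_iff, Sym2.isDiag_iff_proj_eq,
        Sym2.mem_iff, not_or] at hp
      obtain ⟨⟨⟨hx, hy⟩, -⟩, hvx, hvy⟩ := hp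
      simp only [hf, Sym2.lift_mk]
      exact hd x hx y hy (fun h => hvx h.symm) (fun h => hvy h.symm)
  have split := Finset.sum_filter_add_sum_filter_not
    (H.verts.sym2.filter (fun p => ¬ p.IsDiag)) (fun p => v ∉ p) f
  have hmem : s(u,v) ∈ (H.verts.sym2.filter (fun p => ¬ p.IsDiag)).filter
      (fun p => ¬ v ∉ p) :=
    Finset.mem_filter.mpr ⟨Finset.mem_filter.mpr ⟨Finset.mk_mem_sym2_iff.mpr ⟨hu, hv⟩,
      by simp [Sym2.isDiag_iff_proj_eq, hune]⟩, by simp⟩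
  have hpos : 1 ≤ f s(u,v) := by
    simp only [hf, Sym2.lift_mk]
    exact (hS.2.1 u hu v hv).pos_dist_of_ne hune
  have hge : 1 ≤ ∑ p ∈ (H.verts.sym2.filter (fun p => ¬ p.IsDiag)).filter
      (fun p => ¬ v ∉ p), f p :=
    le_trans hpos (Finset.single_le_sum (fun i _ => Nat.zero_le (f i)) hmem)
  have hw : H.wiener = ∑ p ∈ (H.verts.sym2.filter (fun p => ¬ p.IsDiag)), f p := rfl
  rw [key, hw, ← split]
  omega

lemma no_dist_eq (hS : H.IsSoltes) {v : α} (hv : v ∈ H.verts)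
    (hd : ∀ u ∈ H.verts, ∀ w ∈ H.verts, u ≠ v → w ≠ v →
      (H.delete v).dist u w = H.dist u w) : False :=
  absurd (hS.2.2 v hv).2 (ne_of_lt (wiener_delete_lt hS hv hd))

lemma three_le (hS : H.IsSoltes) : 3 ≤ H.verts.card := by
  by_contra h
  have h2 : H.verts.card = 2 := le_antisymm (by omega) hS.1
  obtain ⟨u, w, hne, he⟩ := Finset.card_eq_two.mp h2
  have hw : w ∈ H.verts := by rw [he]; simp
  refine no_dist_eq hS hw fun x hx y hy hxw hyw => ?_
  have hxu : x = u := by rw [he] at hx; simp at hx; tauto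
  have hyu : y = u := by rw [he] at hy; simp at hy; tauto
  subst hxu; subst hyu
  simp [SHypergraph.dist, SimpleGraph.dist_self]

lemma del_edges_two_le (hS : H.IsSoltes) {v : α} (hv : v ∈ H.verts) :
    2 ≤ (H.delete v).edges.card := by
  by_contra hcard
  push_neg at hcard
  have hcard1 : (H.delete v).edges.card ≤ 1 := by omega
  refine no_dist_eq hS hv fun u hu w hw hune hwne => ?_
  by_cases h : u = w
  · subst h; show (H.delete v).twoSection.dist u u = H.twoSection.dist u u
    simp [SimpleGraph.dist_self]
  · have hu' : u ∈ (H.delete v).verts := by simp [Finset.mem_erase, hune, hu]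
    have hw' : w ∈ (H.delete v).verts := by simp [Finset.mem_erase, hwne, hw]
    have hr := (hS.2.2 v hv).1 u hu' w hw'
    obtain ⟨eu, heu, huu⟩ := exists_edge_of_reachable_ne hr h
    obtain ⟨ew, hew, hww⟩ := exists_edge_of_reachable_ne hr.symm (Ne.symm h)
    have heq : eu = ew := Finset.card_le_one.mp hcard1 eu heu ew hew
    have hadj' : (H.delete v).twoSection.Adj u w := ⟨h, eu, heu, huu, heq ▸ hww⟩
    have hadj : H.twoSection.Adj u w :=
      ⟨h, eu, (Finset.mem_filter.mp heu).1, huu, heq ▸ hww⟩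
    show (H.delete v).twoSection.dist u w = H.twoSection.dist u w
    rw [adj_dist_one hadj', adj_dist_one hadj]

lemma deg_le_two (hS : H.IsSoltes) (hle : H.edges.card ≤ 4) {v : α} (hv : v ∈ H.verts) :
    (H.edges.filter (fun e => v ∈ e)).card ≤ 2 := by
  have h2 := del_edges_two_le hS hv
  rw [delete_edges] at h2
  have hsum := Finset.card_filter_add_card_filter_not
    (s := H.edges) (p := fun e => v ∈ e)
  have : (H.edges.filter (fun e => ¬ v ∈ e)) = (H.edges.filter (fun e => v ∉ e)) := rfl
  rw [this] at hsum
  omega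

lemma mem_some_edge (hS : H.IsSoltes) {u : α} (hu : u ∈ H.verts) :
    ∃ e ∈ H.edges, u ∈ e := by
  obtain ⟨w, hw, hne⟩ := Finset.exists_mem_ne (lt_of_lt_of_le one_lt_two hS.1) u
  exact exists_edge_of_reachable_ne (hS.2.1 u hu w hw) (Ne.symm hne)

lemma not_mem_third (hS : H.IsSoltes) (hle : H.edges.card ≤ 4) {y : α} {e f g : Finset α}
    (he : e ∈ H.edges) (hf : f ∈ H.edges) (hg : g ∈ H.edges)
    (hef : e ≠ f) (heg : e ≠ g) (hfg : f ≠ g)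
    (h1 : y ∈ e) (h2 : y ∈ f) : y ∉ g := by
  intro h3
  have hy : y ∈ H.verts := H.edge_sub e he h1
  have hdeg := deg_le_two hS hle hy
  have hsub : ({e, f, g} : Finset (Finset α)) ⊆ H.edges.filter (fun t => y ∈ t) := by
    intro t ht
    simp only [Finset.mem_insert, Finset.mem_singleton] at ht
    rcases ht with rfl | rfl | rfl <;> simp [Finset.mem_filter, he, hf, hg, h1, h2, h3]
  have hcard : ({e, f, g} : Finset (Finset α)).card = 3 := by
    rw [Finset.card_insert_of_notMem (by simp [hef, heg]),
      Finset.card_insert_of_notMem (by simp [hfg]), Finset.card_singleton]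
  have := Finset.card_le_card hsub
  omega

lemma exists_deg2 (hS : H.IsSoltes) : ∃ v a b, a ∈ H.edges ∧ b ∈ H.edges ∧
    a ≠ b ∧ v ∈ a ∧ v ∈ b := by
  by_contra hno
  push_neg at hno
  obtain ⟨u0, hu0⟩ : H.verts.Nonempty := Finset.card_pos.mp (lt_of_lt_of_le two_pos hS.1)
  obtain ⟨e0, he0, hu0e⟩ := mem_some_edge hS hu0
  have hvsub : ∀ w ∈ H.verts, w ∈ e0 := by
    intro w hw
    refine reach_sub (fun e he x hx hxc => ?_) (hS.2.1 u0 hu0 w hw) hu0e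
    by_cases h : e = e0
    · subst h; exact fun _ h => h
    · exact absurd hxc (hno x e e0 he he0 h hx)
  have hsub : H.edges ⊆ {e0} := by
    intro e he
    obtain ⟨x, hx⟩ := Finset.card_pos.mp (lt_of_lt_of_le two_pos (H.edge_card e he))
    have hx0 : x ∈ e0 := hvsub x (H.edge_sub e he hx)
    simp only [Finset.mem_singleton]
    by_contra h
    exact absurd hx0 (hno x e e0 he he0 h hx)
  have h1 : H.edges.card ≤ 1 := le_trans (Finset.card_le_card hsub) (by simp)
  have h2 := del_edges_two_le hS hu0
  have h3 : (H.delete u0).edges.card ≤ H.edges.card := by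
    rw [delete_edges]; exact Finset.card_le_card (Finset.filter_subset _ _)
  omega

lemma D2 (hS : H.IsSoltes) (hle : H.edges.card ≤ 4) {v : α} {a b : Finset α}
    (ha : a ∈ H.edges) (hb : b ∈ H.edges) (hab : a ≠ b) (hva : v ∈ a) (hvb : v ∈ b) :
    ∃ c d, c ∈ H.edges ∧ d ∈ H.edges ∧ c ≠ d ∧ v ∉ c ∧ v ∉ d ∧
      H.edges = {a, b, c, d} := by
  have hv : v ∈ H.verts := H.edge_sub a ha hva
  have h2out : 2 ≤ (H.edges.filter (fun e => v ∉ e)).card := by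
    have := del_edges_two_le hS hv; rwa [delete_edges] at this
  have hsub2 : ({a, b} : Finset (Finset α)) ⊆ H.edges.filter (fun e => v ∈ e) := by
    intro t ht
    simp only [Finset.mem_insert, Finset.mem_singleton] at ht
    rcases ht with rfl | rfl <;> simp [Finset.mem_filter, ha, hb, hva, hvb]
  have hcard2 : ({a, b} : Finset (Finset α)).card = 2 := Finset.card_pair hab
  have h2in : 2 ≤ (H.edges.filter (fun e => v ∈ e)).card := by
    rw [← hcard2]; exact Finset.card_le_card hsub2
  have hsum := Finset.card_filter_add_card_filter_not
    (s := H.edges) (p := fun e => v ∈ e)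
  have hnegeq : (H.edges.filter (fun e => ¬ v ∈ e)) = (H.edges.filter (fun e => v ∉ e)) := rfl
  rw [hnegeq] at hsum
  have hin2 : (H.edges.filter (fun e => v ∈ e)).card = 2 := by omega
  have hout2 : (H.edges.filter (fun e => v ∉ e)).card = 2 := by omega
  have hfin : H.edges.filter (fun e => v ∈ e) = {a, b} :=
    (Finset.eq_of_subset_of_card_le hsub2 (by omega)).symm
  obtain ⟨c, d, hcd, hfout⟩ := Finset.card_eq_two.mp hout2
  have hc : c ∈ H.edges.filter (fun e => v ∉ e) := by rw [hfout]; simp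
  have hd : d ∈ H.edges.filter (fun e => v ∉ e) := by rw [hfout]; simp
  refine ⟨c, d, (Finset.mem_filter.mp hc).1, (Finset.mem_filter.mp hd).1, hcd,
    (Finset.mem_filter.mp hc).2, (Finset.mem_filter.mp hd).2, ?_⟩
  have hU := Finset.filter_union_filter_not_eq (fun e => v ∈ e) H.edges
  rw [hnegeq, hfin, hfout] at hU
  rw [← hU]
  ext t
  simp only [Finset.mem_union, Finset.mem_insert, Finset.mem_singleton]
  tauto

lemma D2' (hS : H.IsSoltes) (hle : H.edges.card ≤ 4) {v : α} {a b c d : Finset α}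
    (hE : H.edges = {a, b, c, d})
    (hab : a ≠ b) (hac : a ≠ c) (had : a ≠ d) (hbc : b ≠ c) (hbd : b ≠ d) (hcd : c ≠ d)
    (hva : v ∈ a) (hvb : v ∈ b) (hvc : v ∉ c) (hvd : v ∉ d) :
    (∀ t, t ∈ a → t ∈ b → t = v) ∧
    (∀ u ∈ H.verts, u ≠ v → u ∈ c ∨ u ∈ d) ∧
    ((∃ z, z ∈ c ∧ z ∈ d) ∨ (∀ u ∈ H.verts, u ≠ v → u ∈ c) ∨
      (∀ u ∈ H.verts, u ≠ v → u ∈ d)) := by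
  have ha : a ∈ H.edges := by rw [hE]; simp
  have hb : b ∈ H.edges := by rw [hE]; simp
  have hc : c ∈ H.edges := by rw [hE]; simp
  have hd : d ∈ H.edges := by rw [hE]; simp
  have hv : v ∈ H.verts := H.edge_sub a ha hva
  have hdel : (H.delete v).edges = {c, d} := by
    rw [delete_edges, hE]
    ext e
    simp only [Finset.mem_filter, Finset.mem_insert, Finset.mem_singleton]
    constructor
    · rintro ⟨rfl | rfl | rfl | rfl, h⟩ <;> tauto
    · rintro (rfl | rfl) <;> tauto
  have hn3 := three_le hS
  have hdelconn := (hS.2.2 v hv).1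
  have hi : ∀ u ∈ H.verts, u ≠ v → u ∈ c ∨ u ∈ d := by
    intro u hu hune
    have hu' : u ∈ (H.delete v).verts := by simp [Finset.mem_erase, hune, hu]
    have hcard : 1 < ((H.delete v).verts).card := by
      rw [delete_verts, Finset.card_erase_of_mem hv]; omega
    obtain ⟨w, hw, hwu⟩ := Finset.exists_mem_ne hcard u
    obtain ⟨e, he, hue⟩ :=
      exists_edge_of_reachable_ne (hdelconn u hu' w hw) (Ne.symm hwu)
    rw [hdel] at he
    simp only [Finset.mem_insert, Finset.mem_singleton] at he
    rcases he with rfl | rfl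
    · exact Or.inl hue
    · exact Or.inr hue
  refine ⟨?_, hi, ?_⟩
  · intro t hta htb
    by_contra htv
    have ht : t ∈ H.verts := H.edge_sub a ha hta
    rcases hi t ht htv with h | h
    · exact not_mem_third hS hle ha hb hc hab hac hbc hta htb h
    · exact not_mem_third hS hle ha hb hd hab had hbd hta htb h
  · by_cases hzd : ∃ z, z ∈ c ∧ z ∈ d
    · exact Or.inl hzd
    push_neg at hzd
    right
    by_contra hboth
    push_neg at hboth
    obtain ⟨⟨u1, hu1, hu1v, hu1c⟩, ⟨u2, hu2, hu2v, hu2d⟩⟩ := hboth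
    have hu1d : u1 ∈ d := (hi u1 hu1 hu1v).resolve_left hu1c
    have hu2c : u2 ∈ c := (hi u2 hu2 hu2v).resolve_right hu2d
    have hreach : (H.delete v).twoSection.Reachable u2 u1 :=
      hdelconn u2 (by simp [Finset.mem_erase, hu2v, hu2]) u1
        (by simp [Finset.mem_erase, hu1v, hu1])
    refine hu1c (reach_sub (fun e he x hx hxc => ?_) hreach hu2c)
    rw [hdel] at he
    simp only [Finset.mem_insert, Finset.mem_singleton] at he
    rcases he with rfl | rfl
    · exact fun _ h => h
    · exact absurd hx (hzd x hxc)

end SHypergraph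
end Stage2
section Stage3
namespace SHypergraph
variable {α : Type*} [DecidableEq α] {H : SHypergraph α}

/-- Case A2: v ∈ a∩b, x ∈ a∩c, y ∈ b∩d, w ∈ b∩c, and a∩d = ∅ is impossible. -/
lemma caseA2 (hS : H.IsSoltes) (hle : H.edges.card ≤ 4) {a b c d : Finset α}
    {v x y w : α} (hE : H.edges = {a, b, c, d})
    (hab : a ≠ b) (hac : a ≠ c) (had : a ≠ d) (hbc : b ≠ c) (hbd : b ≠ d) (hcd : c ≠ d)
    (hva : v ∈ a) (hvb : v ∈ b) (hvc : v ∉ c) (hvd : v ∉ d)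
    (hxa : x ∈ a) (hxc : x ∈ c) (hyb : y ∈ b) (hyd : y ∈ d)
    (hwb : w ∈ b) (hwc : w ∈ c)
    (hAD : ∀ t, ¬ (t ∈ a ∧ t ∈ d)) : False := by
  have ha : a ∈ H.edges := by rw [hE]; simp
  have hb : b ∈ H.edges := by rw [hE]; simp
  have hc : c ∈ H.edges := by rw [hE]; simp
  have hd : d ∈ H.edges := by rw [hE]; simp
  have hwa : w ∉ a := not_mem_third hS hle hb hc ha hbc hab.symm hac.symm hwb hwc
  have hwd : w ∉ d := not_mem_third hS hle hb hc hd hbc hbd hcd hwb hwc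
  have hya : y ∉ a := fun h => hAD y ⟨h, hyd⟩
  have hxd : x ∉ d := fun h => hAD x ⟨hxa, h⟩
  have hE' : H.edges = {b, c, a, d} := by rw [hE]; ext t; simp; tauto
  obtain ⟨-, -, hiii⟩ := D2' hS hle hE' hbc hab.symm hbd hac.symm hcd had
    hwb hwc hwa hwd
  rcases hiii with ⟨t, hta, htd⟩ | hallA | hallD
  · exact hAD t ⟨hta, htd⟩
  · have hyw : y ≠ w := fun h => hwd (h ▸ hyd)
    exact hya (hallA y (H.edge_sub b hb hyb) hyw)
  · have hxw : x ≠ w := fun h => hwa (h ▸ hxa)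
    exact hxd (hallD x (H.edge_sub a ha hxa) hxw)

/-- Case C4: v∈a∩b, x∈a∩c, y∈b∩d, z∈c∩d and a∩d = b∩c = ∅ is impossible. -/
lemma caseCW (hS : H.IsSoltes) (hle : H.edges.card ≤ 4) {a b c d : Finset α}
    {v x y z : α} (hE : H.edges = {a, b, c, d})
    (hab : a ≠ b) (hac : a ≠ c) (had : a ≠ d) (hbc : b ≠ c) (hbd : b ≠ d) (hcd : c ≠ d)
    (hva : v ∈ a) (hvb : v ∈ b) (hvc : v ∉ c) (hvd : v ∉ d)
    (hxa : x ∈ a) (hxc : x ∈ c) (hyb : y ∈ b) (hyd : y ∈ d)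
    (hzc : z ∈ c) (hzd : z ∈ d)
    (hAD : ∀ t, ¬ (t ∈ a ∧ t ∈ d)) (hBC : ∀ t, ¬ (t ∈ b ∧ t ∈ c)) : False := by
  have ha : a ∈ H.edges := by rw [hE]; simp
  have hb : b ∈ H.edges := by rw [hE]; simp
  have hc : c ∈ H.edges := by rw [hE]; simp
  have hd : d ∈ H.edges := by rw [hE]; simp
  have hv : v ∈ H.verts := H.edge_sub a ha hva
  have hxv : x ∈ H.verts := H.edge_sub a ha hxa
  have hyv : y ∈ H.verts := H.edge_sub b hb hyb
  have hzv : z ∈ H.verts := H.edge_sub c hc hzc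
  have hxb : x ∉ b := fun h => hBC x ⟨h, hxc⟩
  have hxd : x ∉ d := fun h => hAD x ⟨hxa, h⟩
  have hya : y ∉ a := fun h => hAD y ⟨h, hyd⟩
  have hyc : y ∉ c := fun h => hBC y ⟨hyb, h⟩
  have hza : z ∉ a := fun h => hAD z ⟨h, hzd⟩
  have hzb : z ∉ b := fun h => hBC z ⟨h, hzc⟩
  have hvx : v ≠ x := fun h => hvc (h ▸ hxc)
  have hvy : v ≠ y := fun h => hvd (h ▸ hyd)
  have hxy : x ≠ y := fun h => hya (h ▸ hxa)
  have hxz : x ≠ z := fun h => hza (h ▸ hxa)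
  have hyz : y ≠ z := fun h => hzb (h.symm ▸ hyb)
  -- D2' instances
  obtain ⟨-, hiv, -⟩ := D2' hS hle hE hab hac had hbc hbd hcd hva hvb hvc hvd
  obtain ⟨-, hix, -⟩ := D2' hS hle (show H.edges = {a, c, b, d} by rw [hE]; ext t; simp; tauto)
    hac hab had hbc.symm hcd hbd hxa hxc hxb hxd
  obtain ⟨-, hiy, -⟩ := D2' hS hle (show H.edges = {b, d, a, c} by rw [hE]; ext t; simp; tauto)
    hbd hab.symm hbc had.symm hcd.symm hac hyb hyd hya hyc
  obtain ⟨hiiz, -, -⟩ := D2' hS hle (show H.edges = {c, d, a, b} by rw [hE]; ext t; simp; tauto)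
    hcd hac.symm hbc.symm had.symm hbd.symm hab hzc hzd hza hzb
  -- characterization of the vertex set
  have hchar : ∀ u ∈ H.verts, u ≠ v → u = x ∨ u = y ∨ u = z := by
    intro u hu huv
    rcases hiv u hu huv with huc | hud
    · by_cases hux : u = x
      · exact Or.inl hux
      · rcases hix u hu hux with hub | hud'
        · exact absurd ⟨hub, huc⟩ (hBC u)
        · exact Or.inr (Or.inr (hiiz u huc hud'))
    · by_cases huy : u = y
      · exact Or.inr (Or.inl huy)
      · rcases hiy u hu huy with hua | huc'
        · exact absurd ⟨hua, hud⟩ (hAD u)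
        · exact Or.inr (Or.inr (hiiz u huc' hud))
  -- adjacency facts
  have hadjxzH : H.twoSection.Adj x z := ⟨hxz, c, hc, hxc, hzc⟩
  have hadjyzH : H.twoSection.Adj y z := ⟨hyz, d, hd, hyd, hzd⟩
  have hcdel : c ∈ (H.delete v).edges := Finset.mem_filter.mpr ⟨hc, hvc⟩
  have hddel : d ∈ (H.delete v).edges := Finset.mem_filter.mpr ⟨hd, hvd⟩
  have hadjxzD : (H.delete v).twoSection.Adj x z := ⟨hxz, c, hcdel, hxc, hzc⟩
  have hadjyzD : (H.delete v).twoSection.Adj y z := ⟨hyz, d, hddel, hyd, hzd⟩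
  have hnadjH : ¬ H.twoSection.Adj x y := by
    rintro ⟨-, e, he, hxe, hye⟩
    rw [hE] at he
    simp only [Finset.mem_insert, Finset.mem_singleton] at he
    rcases he with rfl | rfl | rfl | rfl
    · exact hya hye
    · exact hxb hxe
    · exact hyc hye
    · exact hxd hxe
  have hnadjD : ¬ (H.delete v).twoSection.Adj x y := by
    rintro ⟨hne, e, he, hxe, hye⟩
    exact hnadjH ⟨hne, e, (Finset.mem_filter.mp he).1, hxe, hye⟩
  have hdxyH : H.twoSection.dist x y = 2 := dist_two hxy hnadjH hadjxzH hadjyzH.symm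
  have hdxyD : (H.delete v).twoSection.dist x y = 2 := dist_two hxy hnadjD hadjxzD hadjyzD.symm
  -- all remaining distances are unchanged
  refine no_dist_eq hS hv fun u hu w hw huv hwv => ?_
  show (H.delete v).twoSection.dist u w = H.twoSection.dist u w
  rcases hchar u hu huv with rfl | rfl | rfl <;> rcases hchar w hw hwv with rfl | rfl | rfl
  · simp [SimpleGraph.dist_self]
  · rw [hdxyD, hdxyH]
  · rw [adj_dist_one hadjxzD, adj_dist_one hadjxzH]
  · rw [SimpleGraph.dist_comm, hdxyD, SimpleGraph.dist_comm, hdxyH]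
  · simp [SimpleGraph.dist_self]
  · rw [adj_dist_one hadjyzD, adj_dist_one hadjyzH]
  · rw [adj_dist_one hadjxzD.symm, adj_dist_one hadjxzH.symm]
  · rw [adj_dist_one hadjyzD.symm, adj_dist_one hadjyzH.symm]
  · simp [SimpleGraph.dist_self]

end SHypergraph
end Stage3
section Stage4
namespace SHypergraph
variable {α : Type*} [DecidableEq α] {H : SHypergraph α}

/-- Case K4: all six pairwise intersections nonempty is impossible (Wiener count). -/
lemma caseKW (hS : H.IsSoltes) (hle : H.edges.card ≤ 4) {a b c d : Finset α}
    {v x y z p q : α} (hE : H.edges = {a, b, c, d})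
    (hab : a ≠ b) (hac : a ≠ c) (had : a ≠ d) (hbc : b ≠ c) (hbd : b ≠ d) (hcd : c ≠ d)
    (hva : v ∈ a) (hvb : v ∈ b) (hvc : v ∉ c) (hvd : v ∉ d)
    (hxa : x ∈ a) (hxc : x ∈ c) (hyb : y ∈ b) (hyd : y ∈ d)
    (hzc : z ∈ c) (hzd : z ∈ d) (hpa : p ∈ a) (hpd : p ∈ d)
    (hqb : q ∈ b) (hqc : q ∈ c) : False := by
  have ha : a ∈ H.edges := by rw [hE]; simp
  have hb : b ∈ H.edges := by rw [hE]; simp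
  have hc : c ∈ H.edges := by rw [hE]; simp
  have hd : d ∈ H.edges := by rw [hE]; simp
  have hv : v ∈ H.verts := H.edge_sub a ha hva
  have hxv : x ∈ H.verts := H.edge_sub a ha hxa
  have hyv : y ∈ H.verts := H.edge_sub b hb hyb
  have hzv : z ∈ H.verts := H.edge_sub c hc hzc
  have hpv : p ∈ H.verts := H.edge_sub a ha hpa
  have hqv : q ∈ H.verts := H.edge_sub b hb hqb
  -- non-membership facts
  have hxb : x ∉ b := not_mem_third hS hle ha hc hb hac hab hbc.symm hxa hxc
  have hxd : x ∉ d := not_mem_third hS hle ha hc hd hac had hcd hxa hxc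
  have hya : y ∉ a := not_mem_third hS hle hb hd ha hbd hab.symm had.symm hyb hyd
  have hyc : y ∉ c := not_mem_third hS hle hb hd hc hbd hbc hcd.symm hyb hyd
  have hza : z ∉ a := not_mem_third hS hle hc hd ha hcd hac.symm had.symm hzc hzd
  have hzb : z ∉ b := not_mem_third hS hle hc hd hb hcd hbc.symm hbd.symm hzc hzd
  have hpb : p ∉ b := not_mem_third hS hle ha hd hb had hab hbd.symm hpa hpd
  have hpc : p ∉ c := not_mem_third hS hle ha hd hc had hac hcd.symm hpa hpd
  have hqa : q ∉ a := not_mem_third hS hle hb hc ha hbc hab.symm hac.symm hqb hqc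
  have hqd : q ∉ d := not_mem_third hS hle hb hc hd hbc hbd hcd hqb hqc
  -- distinctness
  have hvx : v ≠ x := fun h => hvc (h ▸ hxc)
  have hvy : v ≠ y := fun h => hvd (h ▸ hyd)
  have hvz : v ≠ z := fun h => hvc (h ▸ hzc)
  have hvp : v ≠ p := fun h => hvd (h ▸ hpd)
  have hvq : v ≠ q := fun h => hvc (h ▸ hqc)
  have hxy : x ≠ y := fun h => hya (h ▸ hxa)
  have hxz : x ≠ z := fun h => hza (h ▸ hxa)
  have hxp : x ≠ p := fun h => hpc (h ▸ hxc)
  have hxq : x ≠ q := fun h => hqa (h ▸ hxa)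
  have hyz : y ≠ z := fun h => hzb (h ▸ hyb)
  have hyp : y ≠ p := fun h => hpb (h ▸ hyb)
  have hyq : y ≠ q := fun h => hqd (h ▸ hyd)
  have hzp : z ≠ p := fun h => hpc (h ▸ hzc)
  have hzq : z ≠ q := fun h => hqd (h ▸ hzd)
  have hpq : p ≠ q := fun h => hqa (h ▸ hpa)
  -- D2' instances
  obtain ⟨hiiv, hiv, -⟩ := D2' hS hle hE hab hac had hbc hbd hcd hva hvb hvc hvd
  obtain ⟨hiix, hix, -⟩ := D2' hS hle
    (show H.edges = {a, c, b, d} by rw [hE]; ext t; simp; tauto)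
    hac hab had hbc.symm hcd hbd hxa hxc hxb hxd
  obtain ⟨hiiy, hiy, -⟩ := D2' hS hle
    (show H.edges = {b, d, a, c} by rw [hE]; ext t; simp; tauto)
    hbd hab.symm hbc had.symm hcd.symm hac hyb hyd hya hyc
  obtain ⟨hiiz, -, -⟩ := D2' hS hle
    (show H.edges = {c, d, a, b} by rw [hE]; ext t; simp; tauto)
    hcd hac.symm hbc.symm had.symm hbd.symm hab hzc hzd hza hzb
  obtain ⟨hiip, -, -⟩ := D2' hS hle
    (show H.edges = {a, d, b, c} by rw [hE]; ext t; simp; tauto)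
    had hab hac hbd.symm hcd.symm hbc hpa hpd hpb hpc
  obtain ⟨hiiq, -, -⟩ := D2' hS hle
    (show H.edges = {b, c, a, d} by rw [hE]; ext t; simp; tauto)
    hbc hab.symm hbd hac.symm hcd had hqb hqc hqa hqd
  -- edge characterizations
  have hachar : ∀ u ∈ a, u = v ∨ u = x ∨ u = p := by
    intro u hua
    by_cases h : u = v
    · exact Or.inl h
    · rcases hiv u (H.edge_sub a ha hua) h with huc | hud
      · exact Or.inr (Or.inl (hiix u hua huc))
      · exact Or.inr (Or.inr (hiip u hua hud))
  have hbchar : ∀ u ∈ b, u = v ∨ u = y ∨ u = q := by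
    intro u hub
    by_cases h : u = v
    · exact Or.inl h
    · rcases hiv u (H.edge_sub b hb hub) h with huc | hud
      · exact Or.inr (Or.inr (hiiq u hub huc))
      · exact Or.inr (Or.inl (hiiy u hub hud))
  have hcchar : ∀ u ∈ c, u = x ∨ u = z ∨ u = q := by
    intro u huc
    by_cases h : u = x
    · exact Or.inl h
    · rcases hix u (H.edge_sub c hc huc) h with hub | hud
      · exact Or.inr (Or.inr (hiiq u hub huc))
      · exact Or.inr (Or.inl (hiiz u huc hud))
  have hdchar : ∀ u ∈ d, u = y ∨ u = z ∨ u = p := by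
    intro u hud
    by_cases h : u = y
    · exact Or.inl h
    · rcases hiy u (H.edge_sub d hd hud) h with hua | huc
      · exact Or.inr (Or.inr (hiip u hua hud))
      · exact Or.inr (Or.inl (hiiz u huc hud))
  -- vertex set
  have hverts : H.verts = {v, x, y, z, p, q} := by
    ext u
    simp only [Finset.mem_insert, Finset.mem_singleton]
    constructor
    · intro hu
      obtain ⟨e, he, hue⟩ := mem_some_edge hS hu
      rw [hE] at he
      simp only [Finset.mem_insert, Finset.mem_singleton] at he
      rcases he with rfl | rfl | rfl | rfl
      · rcases hachar u hue with h | h | h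
        · exact Or.inl h
        · exact Or.inr (Or.inl h)
        · exact Or.inr (Or.inr (Or.inr (Or.inr (Or.inl h))))
      · rcases hbchar u hue with h | h | h
        · exact Or.inl h
        · exact Or.inr (Or.inr (Or.inl h))
        · exact Or.inr (Or.inr (Or.inr (Or.inr (Or.inr h))))
      · rcases hcchar u hue with h | h | h
        · exact Or.inr (Or.inl h)
        · exact Or.inr (Or.inr (Or.inr (Or.inl h)))
        · exact Or.inr (Or.inr (Or.inr (Or.inr (Or.inr h))))
      · rcases hdchar u hue with h | h | h
        · exact Or.inr (Or.inr (Or.inl h))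
        · exact Or.inr (Or.inr (Or.inr (Or.inl h)))
        · exact Or.inr (Or.inr (Or.inr (Or.inr (Or.inl h))))
    · rintro (rfl | rfl | rfl | rfl | rfl | rfl) <;> assumption
  -- distances in H
  have advx : H.twoSection.Adj v x := ⟨hvx, a, ha, hva, hxa⟩
  have advy : H.twoSection.Adj v y := ⟨hvy, b, hb, hvb, hyb⟩
  have advp : H.twoSection.Adj v p := ⟨hvp, a, ha, hva, hpa⟩
  have advq : H.twoSection.Adj v q := ⟨hvq, b, hb, hvb, hqb⟩
  have adxz : H.twoSection.Adj x z := ⟨hxz, c, hc, hxc, hzc⟩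
  have adxp : H.twoSection.Adj x p := ⟨hxp, a, ha, hxa, hpa⟩
  have adxq : H.twoSection.Adj x q := ⟨hxq, c, hc, hxc, hqc⟩
  have adyz : H.twoSection.Adj y z := ⟨hyz, d, hd, hyd, hzd⟩
  have adyp : H.twoSection.Adj y p := ⟨hyp, d, hd, hyd, hpd⟩
  have adyq : H.twoSection.Adj y q := ⟨hyq, b, hb, hyb, hqb⟩
  have adzp : H.twoSection.Adj z p := ⟨hzp, d, hd, hzd, hpd⟩
  have adzq : H.twoSection.Adj z q := ⟨hzq, c, hc, hzc, hqc⟩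
  have nadjvz : ¬ H.twoSection.Adj v z := by
    rintro ⟨-, e, he, h1, h2⟩
    rw [hE] at he
    simp only [Finset.mem_insert, Finset.mem_singleton] at he
    rcases he with rfl | rfl | rfl | rfl
    · exact hza h2
    · exact hzb h2
    · exact hvc h1
    · exact hvd h1
  have nadjxy : ¬ H.twoSection.Adj x y := by
    rintro ⟨-, e, he, h1, h2⟩
    rw [hE] at he
    simp only [Finset.mem_insert, Finset.mem_singleton] at he
    rcases he with rfl | rfl | rfl | rfl
    · exact hya h2
    · exact hxb h1
    · exact hyc h2
    · exact hxd h1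
  have nadjpq : ¬ H.twoSection.Adj p q := by
    rintro ⟨-, e, he, h1, h2⟩
    rw [hE] at he
    simp only [Finset.mem_insert, Finset.mem_singleton] at he
    rcases he with rfl | rfl | rfl | rfl
    · exact hqa h2
    · exact hpb h1
    · exact hpc h1
    · exact hqd h2
  have dvx : H.dist v x = 1 := adj_dist_one advx
  have dvy : H.dist v y = 1 := adj_dist_one advy
  have dvz : H.dist v z = 2 := dist_two hvz nadjvz advx adxz
  have dvp : H.dist v p = 1 := adj_dist_one advp
  have dvq : H.dist v q = 1 := adj_dist_one advq
  have dxy : H.dist x y = 2 := dist_two hxy nadjxy adxz adyz.symm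
  have dxz : H.dist x z = 1 := adj_dist_one adxz
  have dxp : H.dist x p = 1 := adj_dist_one adxp
  have dxq : H.dist x q = 1 := adj_dist_one adxq
  have dyz : H.dist y z = 1 := adj_dist_one adyz
  have dyp : H.dist y p = 1 := adj_dist_one adyp
  have dyq : H.dist y q = 1 := adj_dist_one adyq
  have dzp : H.dist z p = 1 := adj_dist_one adzp
  have dzq : H.dist z q = 1 := adj_dist_one adzq
  have dpq : H.dist p q = 2 := dist_two hpq nadjpq adzp.symm adzq
  -- the deleted hypergraph
  have hdelE : (H.delete v).edges = {c, d} := by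
    rw [delete_edges, hE]
    ext e
    simp only [Finset.mem_filter, Finset.mem_insert, Finset.mem_singleton]
    constructor
    · rintro ⟨rfl | rfl | rfl | rfl, h⟩ <;> tauto
    · rintro (rfl | rfl) <;> tauto
  have hcdel : c ∈ (H.delete v).edges := by rw [hdelE]; simp
  have hddel : d ∈ (H.delete v).edges := by rw [hdelE]; simp
  have adxz' : (H.delete v).twoSection.Adj x z := ⟨hxz, c, hcdel, hxc, hzc⟩
  have adxq' : (H.delete v).twoSection.Adj x q := ⟨hxq, c, hcdel, hxc, hqc⟩
  have adzq' : (H.delete v).twoSection.Adj z q := ⟨hzq, c, hcdel, hzc, hqc⟩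
  have adyz' : (H.delete v).twoSection.Adj y z := ⟨hyz, d, hddel, hyd, hzd⟩
  have adyp' : (H.delete v).twoSection.Adj y p := ⟨hyp, d, hddel, hyd, hpd⟩
  have adzp' : (H.delete v).twoSection.Adj z p := ⟨hzp, d, hddel, hzd, hpd⟩
  have nadjxy' : ¬ (H.delete v).twoSection.Adj x y := by
    rintro ⟨-, e, he, h1, h2⟩
    rw [hdelE] at he
    simp only [Finset.mem_insert, Finset.mem_singleton] at he
    rcases he with rfl | rfl
    · exact hyc h2
    · exact hxd h1
  have nadjxp' : ¬ (H.delete v).twoSection.Adj x p := by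
    rintro ⟨-, e, he, h1, h2⟩
    rw [hdelE] at he
    simp only [Finset.mem_insert, Finset.mem_singleton] at he
    rcases he with rfl | rfl
    · exact hpc h2
    · exact hxd h1
  have nadjyq' : ¬ (H.delete v).twoSection.Adj y q := by
    rintro ⟨-, e, he, h1, h2⟩
    rw [hdelE] at he
    simp only [Finset.mem_insert, Finset.mem_singleton] at he
    rcases he with rfl | rfl
    · exact hyc h1
    · exact hqd h2
  have nadjpq' : ¬ (H.delete v).twoSection.Adj p q := by
    rintro ⟨-, e, he, h1, h2⟩
    rw [hdelE] at he
    simp only [Finset.mem_insert, Finset.mem_singleton] at he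
    rcases he with rfl | rfl
    · exact hpc h1
    · exact hqd h2
  have dxy' : (H.delete v).dist x y = 2 := dist_two hxy nadjxy' adxz' adyz'.symm
  have dxz' : (H.delete v).dist x z = 1 := adj_dist_one adxz'
  have dxp' : (H.delete v).dist x p = 2 := dist_two hxp nadjxp' adxz' adzp'
  have dxq' : (H.delete v).dist x q = 1 := adj_dist_one adxq'
  have dyz' : (H.delete v).dist y z = 1 := adj_dist_one adyz'
  have dyp' : (H.delete v).dist y p = 1 := adj_dist_one adyp'
  have dyq' : (H.delete v).dist y q = 2 := dist_two hyq nadjyq' adyz' adzq'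
  have dzp' : (H.delete v).dist z p = 1 := adj_dist_one adzp'
  have dzq' : (H.delete v).dist z q = 1 := adj_dist_one adzq'
  have dpq' : (H.delete v).dist p q = 2 := dist_two hpq nadjpq' adzp'.symm adzq'
  -- wiener of H
  have hW : H.wiener = 18 := by
    rw [wiener, hverts]
    rw [sum_nd_insert _ (show v ∉ ({x, y, z, p, q} : Finset α) by
      simp [hvx, hvy, hvz, hvp, hvq])]
    rw [sum_nd_insert _ (show x ∉ ({y, z, p, q} : Finset α) by
      simp [hxy, hxz, hxp, hxq])]
    rw [sum_nd_insert _ (show y ∉ ({z, p, q} : Finset α) by simp [hyz, hyp, hyq])]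
    rw [sum_nd_insert _ (show z ∉ ({p, q} : Finset α) by simp [hzp, hzq])]
    rw [sum_nd_insert _ (show p ∉ ({q} : Finset α) by simp [hpq])]
    rw [sum_nd_singleton]
    simp [Finset.sum_insert, Finset.mem_insert, Finset.mem_singleton,
      hxy, hxz, hxp, hxq, hyz, hyp, hyq, hzp, hzq, hpq, Sym2.lift_mk,
      dvx, dvy, dvz, dvp, dvq, dxy, dxz, dxp, dxq, dyz, dyp, dyq, dzp, dzq, dpq]
  -- wiener of the deletion
  have hW' : (H.delete v).wiener = 14 := by
    rw [wiener, delete_verts, hverts,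
      Finset.erase_insert (by simp [hvx, hvy, hvz, hvp, hvq])]
    rw [sum_nd_insert _ (show x ∉ ({y, z, p, q} : Finset α) by
      simp [hxy, hxz, hxp, hxq])]
    rw [sum_nd_insert _ (show y ∉ ({z, p, q} : Finset α) by simp [hyz, hyp, hyq])]
    rw [sum_nd_insert _ (show z ∉ ({p, q} : Finset α) by simp [hzp, hzq])]
    rw [sum_nd_insert _ (show p ∉ ({q} : Finset α) by simp [hpq])]
    rw [sum_nd_singleton]
    simp [Finset.sum_insert, Finset.mem_insert, Finset.mem_singleton,
      hxy, hxz, hxp, hxq, hyz, hyp, hyq, hzp, hzq, hpq, Sym2.lift_mk,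
      dxy', dxz', dxp', dxq', dyz', dyp', dyq', dzp', dzq', dpq']
  have heq := (hS.2.2 v hv).2
  rw [hW, hW'] at heq
  exact absurd heq (by norm_num)

end SHypergraph
end Stage4
section Stage5
namespace SHypergraph
variable {α : Type*} [DecidableEq α] {H : SHypergraph α}

/-- Case A: v ∈ a∩b, x ∈ a∩c, y ∈ b∩d leads to a contradiction. -/
lemma caseA (hS : H.IsSoltes) (hle : H.edges.card ≤ 4) {a b c d : Finset α}
    {v x y : α} (hE : H.edges = {a, b, c, d})
    (hab : a ≠ b) (hac : a ≠ c) (had : a ≠ d) (hbc : b ≠ c) (hbd : b ≠ d) (hcd : c ≠ d)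
    (hva : v ∈ a) (hvb : v ∈ b) (hvc : v ∉ c) (hvd : v ∉ d)
    (hxa : x ∈ a) (hxc : x ∈ c) (hyb : y ∈ b) (hyd : y ∈ d) : False := by
  have ha : a ∈ H.edges := by rw [hE]; simp
  have hb : b ∈ H.edges := by rw [hE]; simp
  have hc : c ∈ H.edges := by rw [hE]; simp
  have hd : d ∈ H.edges := by rw [hE]; simp
  have hxd : x ∉ d := not_mem_third hS hle ha hc hd hac had hcd hxa hxc
  have hyc : y ∉ c := not_mem_third hS hle hb hd hc hbd hbc hcd.symm hyb hyd
  obtain ⟨-, -, hiiiv⟩ := D2' hS hle hE hab hac had hbc hbd hcd hva hvb hvc hvd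
  have hz : ∃ z, z ∈ c ∧ z ∈ d := by
    rcases hiiiv with h | hallc | halld
    · exact h
    · exact absurd (hallc y (H.edge_sub b hb hyb) (fun h => hvd (h ▸ hyd))) hyc
    · exact absurd (halld x (H.edge_sub a ha hxa) (fun h => hvc (h ▸ hxc))) hxd
  obtain ⟨z, hzc, hzd⟩ := hz
  by_cases hbc2 : ∃ w, w ∈ b ∧ w ∈ c
  · obtain ⟨w, hwb, hwc⟩ := hbc2
    by_cases had2 : ∃ t, t ∈ a ∧ t ∈ d
    · obtain ⟨p, hpa, hpd⟩ := had2
      exact caseKW hS hle hE hab hac had hbc hbd hcd hva hvb hvc hvd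
        hxa hxc hyb hyd hzc hzd hpa hpd hwb hwc
    · exact caseA2 hS hle hE hab hac had hbc hbd hcd hva hvb hvc hvd
        hxa hxc hyb hyd hwb hwc (fun t ht => had2 ⟨t, ht⟩)
  · by_cases had2 : ∃ p, p ∈ a ∧ p ∈ d
    · obtain ⟨p, hpa, hpd⟩ := had2
      exact caseA2 hS hle (show H.edges = {b, a, d, c} by rw [hE]; ext t; simp; tauto)
        hab.symm hbd hbc had hac hcd.symm hvb hva hvd hvc
        hyb hyd hxa hxc hpa hpd (fun t ht => hbc2 ⟨t, ht⟩)
    · exact caseCW hS hle hE hab hac had hbc hbd hcd hva hvb hvc hvd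
        hxa hxc hyb hyd hzc hzd (fun t ht => had2 ⟨t, ht⟩) (fun t ht => hbc2 ⟨t, ht⟩)

/-- Main case lemma: v ∈ a∩b of degree two and x ∈ a∩c is impossible. -/
lemma main2 (hS : H.IsSoltes) (hle : H.edges.card ≤ 4) {a b c d : Finset α}
    {v x : α} (hE : H.edges = {a, b, c, d})
    (hab : a ≠ b) (hac : a ≠ c) (had : a ≠ d) (hbc : b ≠ c) (hbd : b ≠ d) (hcd : c ≠ d)
    (hva : v ∈ a) (hvb : v ∈ b) (hvc : v ∉ c) (hvd : v ∉ d)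
    (hxa : x ∈ a) (hxc : x ∈ c) : False := by
  have ha : a ∈ H.edges := by rw [hE]; simp
  have hb : b ∈ H.edges := by rw [hE]; simp
  have hc : c ∈ H.edges := by rw [hE]; simp
  have hd : d ∈ H.edges := by rw [hE]; simp
  have hv : v ∈ H.verts := H.edge_sub a ha hva
  obtain ⟨-, hiv, hiiiv⟩ := D2' hS hle hE hab hac had hbc hbd hcd hva hvb hvc hvd
  obtain ⟨y, hyb, hyv⟩ := Finset.exists_mem_ne
    (lt_of_lt_of_le one_lt_two (H.edge_card b hb)) v
  have hyvert : y ∈ H.verts := H.edge_sub b hb hyb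
  rcases hiv y hyvert hyv with hyc | hyd
  · -- y ∈ c : case B
    by_cases hbd2 : ∃ t, t ∈ b ∧ t ∈ d
    · obtain ⟨y', h1, h2⟩ := hbd2
      exact caseA hS hle hE hab hac had hbc hbd hcd hva hvb hvc hvd hxa hxc h1 h2
    · push_neg at hbd2
      by_cases hcd2 : ∃ t, t ∈ c ∧ t ∈ d
      · -- B1
        obtain ⟨z, hzc, hzd⟩ := hcd2
        have hxb : x ∉ b := not_mem_third hS hle ha hc hb hac hab hbc.symm hxa hxc
        have hxd : x ∉ d := not_mem_third hS hle ha hc hd hac had hcd hxa hxc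
        obtain ⟨-, -, hiiix⟩ := D2' hS hle
          (show H.edges = {a, c, b, d} by rw [hE]; ext t; simp; tauto)
          hac hab had hbc.symm hcd hbd hxa hxc hxb hxd
        rcases hiiix with ⟨t, htb, htd⟩ | hallb | halld
        · exact hbd2 t htb htd
        · have hzb : z ∉ b := not_mem_third hS hle hc hd hb hcd hbc.symm hbd.symm hzc hzd
          exact hzb (hallb z (H.edge_sub c hc hzc) (fun h => hxd (h ▸ hzd)))
        · exact hvd (halld v hv (fun h => hvc (h ▸ hxc)))
      · push_neg at hcd2
        by_cases had2 : ∃ t, t ∈ a ∧ t ∈ d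
        · -- B2
          obtain ⟨p, hpa, hpd⟩ := had2
          rcases hiiiv with ⟨t, htc, htd⟩ | hallc | halld
          · exact hcd2 t htc htd
          · have hpc : p ∉ c := not_mem_third hS hle ha hd hc had hac hcd.symm hpa hpd
            exact hpc (hallc p (H.edge_sub a ha hpa) (fun h => hvd (h ▸ hpd)))
          · have hxd : x ∉ d := not_mem_third hS hle ha hc hd hac had hcd hxa hxc
            exact hxd (halld x (H.edge_sub a ha hxa) (fun h => hvc (h ▸ hxc)))
        · -- edge d is disconnected from the rest
          push_neg at had2
          obtain ⟨u, hud⟩ := Finset.card_pos.mp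
            (lt_of_lt_of_le two_pos (H.edge_card d hd))
          have huv : u ∈ H.verts := H.edge_sub d hd hud
          refine hvd (reach_sub (fun e he t ht htd => ?_) (hS.2.1 u huv v hv) hud)
          rw [hE] at he
          simp only [Finset.mem_insert, Finset.mem_singleton] at he
          rcases he with rfl | rfl | rfl | rfl
          · exact absurd htd (had2 t ht)
          · exact absurd htd (hbd2 t ht)
          · exact absurd htd (hcd2 t ht)
          · exact fun _ h => h
  · exact caseA hS hle hE hab hac had hbc hbd hcd hva hvb hvc hvd hxa hxc hyb hyd

end SHypergraph
end Stage5


theorem stmt16 {α : Type*} [DecidableEq α] (H : SHypergraph α) (h : H.IsSoltes) :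
    5 ≤ H.edges.card := by
  by_contra hlt
  push_neg at hlt
  have hle : H.edges.card ≤ 4 := by omega
  obtain ⟨v, a, b, ha, hb, hab, hva, hvb⟩ := SHypergraph.exists_deg2 h
  obtain ⟨c, d, hc, hd, hcd, hvc, hvd, hE⟩ := SHypergraph.D2 h hle ha hb hab hva hvb
  have hac : a ≠ c := fun h' => hvc (h' ▸ hva)
  have had : a ≠ d := fun h' => hvd (h' ▸ hva)
  have hbc : b ≠ c := fun h' => hvc (h' ▸ hvb)
  have hbd : b ≠ d := fun h' => hvd (h' ▸ hvb)
  obtain ⟨-, hiv, -⟩ := SHypergraph.D2' h hle hE hab hac had hbc hbd hcd hva hvb hvc hvd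
  obtain ⟨x, hxa, hxv⟩ := Finset.exists_mem_ne
    (lt_of_lt_of_le one_lt_two (H.edge_card a ha)) v
  rcases hiv x (H.edge_sub a ha hxa) hxv with hxc | hxd
  · exact SHypergraph.main2 h hle hE hab hac had hbc hbd hcd hva hvb hvc hvd hxa hxc
  · exact SHypergraph.main2 h hle
      (show H.edges = {a, b, d, c} by rw [hE]; ext t; simp; tauto)
      hab had hac hbd hbc hcd.symm hva hvb hvd hvc hxa hxd
end
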